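/- arXiv:0910.3369 — 3 statements merged into one kernel-verified Lean document; each statement's English description precedes it below -/
import Mathlib

section
/- Let (x_i, f_i) be an unconditional and locally shrinking Schauder frame of a Banach space X with unconditional constant K_u, and let (u_i) be a normalized block sequence of (x_i). Then for any ε > 0 there is a subsequence (v_i) of (u_i) which is (K_u + ε)-unconditional; that is, for all finitely supported real scalar sequences (λ_i) and all sign sequences (ε_i) ∈ {−1,1}^ℕ, one has ‖Σ ε_i λ_i v_i‖ ≤ (K_u + ε)‖Σ λ_i v_i‖. -/
open Filter Topology

/-- `sup { |g z| : z ∈ span (x i : i ≥ n), ‖z‖ ≤ 1 }`. -/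
noncomputable def tailSupX {X : Type*} [NormedAddCommGroup X] [NormedSpace ℝ X]
    (x : ℕ → X) (g : X →L[ℝ] ℝ) (n : ℕ) : ℝ :=
  sSup ((fun z : X => |g z|) ''
    {z | z ∈ Submodule.span ℝ (x '' {i | n ≤ i}) ∧ ‖z‖ ≤ 1})

/-- `u` is a normalized block sequence of `(x i)`. -/
def IsNormalizedBlock {X : Type*} [NormedAddCommGroup X] [NormedSpace ℝ X]
    (x : ℕ → X) (u : ℕ → X) : Prop :=
  ∃ (m n : ℕ → ℕ) (a : ℕ → ℝ), (∀ k, m k ≤ n k) ∧ (∀ k, n k < m (k + 1)) ∧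
    (∀ k, u k = ∑ i ∈ Finset.Icc (m k) (n k), a i • x i) ∧ ∀ k, ‖u k‖ = 1

private lemma geom_tail_le (θ : ℝ) (hθ : 0 ≤ θ) (j N : ℕ) :
    ∑ k ∈ Finset.Ico j N, θ * (1/2:ℝ)^k ≤ 2 * θ * (1/2)^j := by
  rw [Finset.sum_Ico_eq_sum_range]
  calc ∑ i ∈ Finset.range (N - j), θ * (1/2:ℝ)^(j+i)
      = (θ * (1/2)^j) * ∑ i ∈ Finset.range (N-j), (1/2:ℝ)^i := by
        rw [Finset.mul_sum]
        refine Finset.sum_congr rfl fun i _ => ?_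
        rw [pow_add]; ring
    _ ≤ (θ * (1/2)^j) * 2 :=
        mul_le_mul_of_nonneg_left (sum_geometric_two_le _) (by positivity)
    _ = 2 * θ * (1/2)^j := by ring

private lemma exists_chain {α : Type*} (p0 : α) (R : ℕ → α → α → Prop)
    (h : ∀ k p, ∃ q, R k p q) :
    ∃ G : ℕ → α, G 0 = p0 ∧ ∀ k, R k (G k) (G (k+1)) :=
  ⟨fun k => Nat.rec p0 (fun k p => Classical.choose (h k p)) k, rfl,
   fun k => Classical.choose_spec (h k _)⟩

private def StepProp {X : Type*} [NormedAddCommGroup X] [NormedSpace ℝ X]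
    (x : ℕ → X) (f : ℕ → X →L[ℝ] ℝ) (u : ℕ → X) (P : ℕ → X →L[ℝ] X) (γ : ℕ → ℝ)
    (k : ℕ) (p q : (ℕ → ℕ) × (ℕ → ℕ)) : Prop :=
  (∀ j ≤ k, q.1 j = p.1 j) ∧ (∀ j ≤ k+1, q.2 j = p.2 j) ∧
  p.1 k < q.1 (k+1) ∧
  (∀ i < p.2 (k+1), |f i (u (q.1 (k+1)))| * ‖x i‖ * ((p.2 (k+1)):ℝ) ≤ γ (k+1)) ∧
  q.2 (k+1) < q.2 (k+2) ∧
  (∀ j ≤ k+1, ‖P (q.2 (k+2)) (u (q.1 j)) - u (q.1 j)‖ ≤ γ (k+1))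


set_option maxHeartbeats 2000000

/-- Let `(x i, f i)` be an unconditional and locally shrinking Schauder
frame of a Banach space `X` with unconditional constant `Ku`, and `(u i)` a normalized
block sequence of `(x i)`. Then for every `ε > 0` there is a subsequence `(v i) = (u (φ i))`
which is `(Ku + ε)`-unconditional. -/
theorem unconditionalSchauderFrame_block_unconditional_subsequence
    {X : Type*} [NormedAddCommGroup X] [NormedSpace ℝ X] [CompleteSpace X]
    (x : ℕ → X) (f : ℕ → X →L[ℝ] ℝ)
    (hx : ∀ i, x i ≠ 0) (hf : ∀ i, f i ≠ 0)
    (hframe : ∀ v : X,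
      Tendsto (fun n => ∑ i ∈ Finset.range n, f i v • x i) atTop (𝓝 v))
    (huncond : ∀ v : X, HasSum (fun i => f i v • x i) v)
    (hshr : ∀ m : ℕ, Tendsto (tailSupX x (f m)) atTop (𝓝 0))
    (Ku : ℝ)
    (hKu : IsLUB {r : ℝ | ∃ (v : X) (σ : ℕ → ℝ), ‖v‖ ≤ 1 ∧
      (∀ i, σ i = 1 ∨ σ i = -1) ∧ r = ‖∑' i, σ i • (f i v • x i)‖} Ku)
    (u : ℕ → X) (hu : IsNormalizedBlock x u) :
    ∀ ε > (0 : ℝ), ∃ φ : ℕ → ℕ, StrictMono φ ∧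
      ∀ (N : ℕ) (lam σ : ℕ → ℝ), (∀ i, σ i = 1 ∨ σ i = -1) →
        ‖∑ i ∈ Finset.range N, (σ i * lam i) • u (φ i)‖ ≤
          (Ku + ε) * ‖∑ i ∈ Finset.range N, lam i • u (φ i)‖ := by
  obtain ⟨m, n, a, hmn, hnm, hablock, hnorm⟩ := hu
  have hm : StrictMono m := strictMono_nat_of_lt_succ fun k => lt_of_le_of_lt (hmn k) (hnm k)
  intro ε hε
  -- partial sum operators
  set P : ℕ → X →L[ℝ] X :=
    fun L => ∑ i ∈ Finset.range L, (f i).smulRight (x i) with hPdef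
  have hPapply : ∀ L v, P L v = ∑ i ∈ Finset.range L, f i v • x i := by
    intro L v
    simp [hPdef, ContinuousLinearMap.sum_apply, ContinuousLinearMap.smulRight_apply]
  have hPtend : ∀ v : X, Tendsto (fun L => P L v) atTop (𝓝 v) := by
    intro v
    have := hframe v
    simpa [hPapply] using this
  obtain ⟨C0, hC0⟩ : ∃ C', ∀ L, ‖P L‖ ≤ C' := by
    apply banach_steinhaus
    intro v
    obtain ⟨c, hc⟩ := ((hPtend v).norm).bddAbove_range
    exact ⟨c, fun L => hc ⟨L, rfl⟩⟩
  set C : ℝ := max C0 1 with hCdef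
  have hC1 : (1:ℝ) ≤ C := le_max_right _ _
  have hC0' : 0 < C := lt_of_lt_of_le one_pos hC1
  have hPnorm : ∀ L (w : X), ‖P L w‖ ≤ C * ‖w‖ := by
    intro L w
    calc ‖P L w‖ ≤ ‖P L‖ * ‖w‖ := (P L).le_opNorm w
      _ ≤ C * ‖w‖ := by
          apply mul_le_mul_of_nonneg_right _ (norm_nonneg w)
          exact le_trans (hC0 L) (le_max_left _ _)
  clear hPdef
  clear_value P
  -- small constants
  set θ : ℝ := min (1/20) (ε/(72*C)) with hθdef
  have hθpos : 0 < θ := lt_min (by norm_num) (by positivity)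
  have hθ20 : θ ≤ 1/20 := min_le_left _ _
  have hθC : 72*C*θ ≤ ε := by
    have h1 : θ ≤ ε/(72*C) := min_le_right _ _
    rw [le_div_iff₀ (by positivity)] at h1
    linarith [h1]
  set γ : ℕ → ℝ := fun k => θ * (1/2)^k / (k+1) with hγdef
  have hγpos : ∀ k, 0 < γ k := fun k => by positivity
  have hγmul : ∀ k : ℕ, ((k:ℝ)+1) * γ k = θ * (1/2)^k := by
    intro k
    have hk : ((k:ℝ)+1) ≠ 0 := by positivity
    simp only [hγdef]; rw [mul_div_assoc', mul_div_cancel_left₀ _ hk]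
  have hγle : ∀ k : ℕ, γ k ≤ θ * (1/2)^k := by
    intro k
    have := hγmul k
    nlinarith [hγpos k, Nat.cast_nonneg (α := ℝ) k]
  clear hθdef hγdef hCdef
  clear_value θ γ C
  -- span membership and tail bound
  have huspan : ∀ k, u k ∈ Submodule.span ℝ (x '' {i | m k ≤ i}) := by
    intro k
    rw [hablock k]
    refine Submodule.sum_mem _ fun i hi => Submodule.smul_mem _ _ ?_
    exact Submodule.subset_span ⟨i, (Finset.mem_Icc.mp hi).1, rfl⟩
  have habsle : ∀ i k, |f i (u k)| ≤ tailSupX x (f i) (m k) := by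
    intro i k
    apply le_csSup
    · refine ⟨‖f i‖, ?_⟩
      rintro r ⟨z, ⟨_, hz1⟩, rfl⟩
      calc |f i z| ≤ ‖f i‖ * ‖z‖ := (f i).le_opNorm z
        _ ≤ ‖f i‖ * 1 := by
            exact mul_le_mul_of_nonneg_left hz1 (norm_nonneg _)
        _ = ‖f i‖ := mul_one _
    · exact ⟨u k, ⟨huspan k, le_of_eq (hnorm k)⟩, rfl⟩
  -- step lemma for choosing φ values
  have haveφ : ∀ (B K : ℕ) (c : ℝ), 0 < c →
      ∃ ψ, B < ψ ∧ ∀ i < K, |f i (u ψ)| * ‖x i‖ * (K:ℝ) ≤ c := by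
    intro B K c hc
    have hev : ∀ i : ℕ, ∃ n0 : ℕ, ∀ L ≥ n0,
        tailSupX x (f i) L ≤ c / ((1 + ‖x i‖) * (K+1)) := by
      intro i
      have hb : (0:ℝ) < c / ((1 + ‖x i‖) * (K+1)) := by positivity
      obtain ⟨n0, hn0⟩ := (Metric.tendsto_atTop.mp (hshr i)) _ hb
      exact ⟨n0, fun L hL => by
        have := hn0 L hL
        rw [Real.dist_eq, sub_zero] at this
        exact le_of_lt (lt_of_le_of_lt (le_abs_self _) this)⟩
    choose n0 hn0 using hev
    set ψ : ℕ := max (B+1) ((Finset.range K).sup n0) with hψdef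
    refine ⟨ψ, lt_of_lt_of_le (Nat.lt_succ_self B) (le_max_left _ _), ?_⟩
    intro i hi
    have hm0 : n0 i ≤ m ψ := by
      calc n0 i ≤ (Finset.range K).sup n0 := Finset.le_sup (Finset.mem_range.mpr hi)
        _ ≤ ψ := le_max_right _ _
        _ ≤ m ψ := hm.le_apply
    have h1 : |f i (u ψ)| ≤ c / ((1 + ‖x i‖) * (K+1)) :=
      le_trans (habsle i ψ) (hn0 i (m ψ) hm0)
    have h2 : (0:ℝ) ≤ |f i (u ψ)| := abs_nonneg _
    have h3 : (0:ℝ) ≤ ‖x i‖ := norm_nonneg _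
    have h4 : ‖x i‖ * (K:ℝ) ≤ (1 + ‖x i‖) * (K+1) := by
      have : (K:ℝ) ≤ (K:ℝ)+1 := by linarith
      nlinarith
    calc |f i (u ψ)| * ‖x i‖ * (K:ℝ)
        ≤ (c / ((1 + ‖x i‖) * (K+1))) * (‖x i‖ * (K:ℝ)) := by
          rw [mul_assoc]
          exact mul_le_mul_of_nonneg_right h1 (by positivity)
      _ ≤ (c / ((1 + ‖x i‖) * (K+1))) * ((1 + ‖x i‖) * (K+1)) := by
          exact mul_le_mul_of_nonneg_left h4 (by positivity)
      _ = c := by field_simp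
  -- step lemma for choosing M values
  have haveM : ∀ (g : ℕ → ℕ) (k B : ℕ) (c : ℝ), 0 < c →
      ∃ M', B < M' ∧ ∀ j ≤ k, ‖P M' (u (g j)) - u (g j)‖ ≤ c := by
    intro g k B c hc
    have hev : ∀ j : ℕ, ∃ n0 : ℕ, ∀ L ≥ n0, ‖P L (u (g j)) - u (g j)‖ ≤ c := by
      intro j
      obtain ⟨n0, hn0⟩ := (Metric.tendsto_atTop.mp (hPtend (u (g j)))) c hc
      exact ⟨n0, fun L hL => by
        have := hn0 L hL
        rw [dist_eq_norm] at this
        exact le_of_lt this⟩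
    choose n0 hn0 using hev
    refine ⟨max (B+1) ((Finset.range (k+1)).sup n0),
      lt_of_lt_of_le (Nat.lt_succ_self B) (le_max_left _ _), ?_⟩
    intro j hj
    apply hn0 j
    calc n0 j ≤ (Finset.range (k+1)).sup n0 :=
          Finset.le_sup (Finset.mem_range.mpr (Nat.lt_succ_of_le hj))
      _ ≤ _ := le_max_right _ _
  -- the recursive construction of φ and M
  obtain ⟨M1, hM1pos, hM1⟩ := haveM (fun _ => 0) 0 0 (γ 0) (hγpos 0)
  set p0 : (ℕ → ℕ) × (ℕ → ℕ) := (fun _ => 0, fun j => if j = 0 then 0 else M1) with hp0def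
  have hstep : ∀ (k : ℕ) (p : (ℕ → ℕ) × (ℕ → ℕ)), ∃ q, StepProp x f u P γ k p q := by
    intro k p
    obtain ⟨ψ, hψ1, hψ2⟩ := haveφ (p.1 k) (p.2 (k+1)) (γ (k+1)) (hγpos (k+1))
    set φ' : ℕ → ℕ := Function.update p.1 (k+1) ψ with hφ'def
    obtain ⟨M', hM'1, hM'2⟩ := haveM φ' (k+1) (p.2 (k+1)) (γ (k+1)) (hγpos (k+1))
    refine ⟨(φ', Function.update p.2 (k+2) M'), ?_, ?_, ?_, ?_, ?_, ?_⟩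
    · intro j hj
      exact Function.update_of_ne (by omega) _ _
    · intro j hj
      exact Function.update_of_ne (by omega) _ _
    · simpa [hφ'def, Function.update_self] using hψ1
    · intro i hi
      simpa [hφ'def, Function.update_self] using hψ2 i hi
    · show Function.update p.2 (k+2) M' (k+1) < Function.update p.2 (k+2) M' (k+2)
      rw [Function.update_of_ne (by omega : k+1 ≠ k+2), Function.update_self]
      exact hM'1
    · intro j hj
      show ‖P (Function.update p.2 (k+2) M' (k+2)) (u (φ' j)) - u (φ' j)‖ ≤ γ (k+1)
      rw [Function.update_self]
      exact hM'2 j hj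
  obtain ⟨G, hG0, hG⟩ := exists_chain p0 _ hstep
  set φ : ℕ → ℕ := fun k => (G k).1 k with hφdef
  set M : ℕ → ℕ := fun k => (G k).2 k with hMdef
  have hs1 : ∀ k j, j ≤ k → (G k).1 j = φ j := by
    intro k
    induction k with
    | zero => intro j hj; interval_cases j; rfl
    | succ k ih =>
      intro j hj
      rcases Nat.lt_succ_iff_lt_or_eq.mp (Nat.lt_succ_of_le hj) with h | h
      · rw [(hG k).1 j (Nat.lt_succ_iff.mp h)]
        exact ih j (Nat.lt_succ_iff.mp h)
      · subst h; rfl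
  have hs2 : ∀ k j, j ≤ k+1 → (G k).2 j = M j := by
    intro k
    induction k with
    | zero =>
      intro j hj
      interval_cases j
      · rfl
      · exact ((hG 0).2.1 1 le_rfl).symm
    | succ k ih =>
      intro j hj
      rcases Nat.lt_or_ge j (k+2) with h | h
      · rw [(hG k).2.1 j (Nat.lt_succ_iff.mp h)]
        exact ih j (Nat.lt_succ_iff.mp h)
      · have hj2 : j = k+2 := by omega
        subst hj2
        exact ((hG (k+1)).2.1 (k+2) le_rfl).symm
  have hM0 : M 0 = 0 := by simp [hMdef, hG0, hp0def]
  have hφlt : StrictMono φ := by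
    apply strictMono_nat_of_lt_succ
    intro k
    exact (hG k).2.2.1
  have hMlt : ∀ k, M k < M (k+1) := by
    intro k
    cases k with
    | zero =>
      rw [hM0]
      have h1 : M 1 = M1 := by
        have h := hs2 0 1 le_rfl
        rw [← h, hG0]
        simp [hp0def]
      rw [h1]; exact hM1pos
    | succ k =>
      have h := (hG k).2.2.2.2.1
      rwa [hs2 (k+1) (k+1) (by omega), hs2 (k+1) (k+2) le_rfl] at h
  have hMmono : Monotone M := monotone_nat_of_le_succ fun k => (hMlt k).le
  have hB1 : ∀ k j, j ≤ k → ‖P (M (k+1)) (u (φ j)) - u (φ j)‖ ≤ γ k := by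
    intro k j hj
    cases k with
    | zero =>
      interval_cases j
      have hM1eq : M 1 = M1 := by
        have h := hs2 0 1 le_rfl
        rw [← h, hG0]
        simp [hp0def]
      have hφ0 : φ 0 = 0 := by
        show (G 0).1 0 = 0
        rw [hG0]
      rw [hM1eq, hφ0]
      exact hM1 0 le_rfl
    | succ k =>
      have h := (hG k).2.2.2.2.2 j hj
      rwa [hs2 (k+1) (k+2) le_rfl, hs1 (k+1) j hj] at h
  have hB2 : ∀ j i, i < M j → |f i (u (φ j))| * ‖x i‖ * ((M j):ℝ) ≤ γ j := by
    intro j i hi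
    cases j with
    | zero => rw [hM0] at hi; omega
    | succ k =>
      have h := (hG k).2.2.2.1 i (by rwa [hs2 k (k+1) le_rfl])
      rwa [hs2 k (k+1) le_rfl] at h
  clear hs1 hs2 hG hG0 hM1 hM1pos hstep hφdef hMdef
  clear_value φ M
  refine ⟨φ, hφlt, ?_⟩
  intro N lam σ hσ
  rcases Nat.eq_zero_or_pos N with hN0 | hNpos
  · subst hN0; simp
  set v : ℕ → X := fun j => u (φ j) with hvdef
  show ‖∑ i ∈ Finset.range N, (σ i * lam i) • v i‖ ≤
      (Ku + ε) * ‖∑ i ∈ Finset.range N, lam i • v i‖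
  have hv1 : ∀ j, ‖v j‖ = 1 := fun j => hnorm (φ j)
  have hB1' : ∀ k j, j ≤ k → ‖P (M (k+1)) (v j) - v j‖ ≤ γ k := fun k j hj => hB1 k j hj
  have hB2' : ∀ j i, i < M j → |f i (v j)| * ‖x i‖ * ((M j):ℝ) ≤ γ j :=
    fun j i hi => hB2 j i hi
  set w : X := ∑ i ∈ Finset.range N, lam i • v i with hwdef
  set w' : X := ∑ i ∈ Finset.range N, (σ i * lam i) • v i with hw'def
  clear hvdef
  clear_value v w w'
  -- small partial sums on late vectors
  have hPL : ∀ j L, L ≤ M j → ‖P L (v j)‖ ≤ γ j := by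
    intro j L hL
    rcases Nat.eq_zero_or_pos (M j) with h0 | hpos
    · have hL0 : L = 0 := by omega
      subst hL0
      simpa [hPapply] using (hγpos j).le
    have hMj : (0:ℝ) < (M j : ℝ) := by exact_mod_cast hpos
    rw [hPapply]
    calc ‖∑ i ∈ Finset.range L, f i (v j) • x i‖
        ≤ ∑ i ∈ Finset.range L, ‖f i (v j) • x i‖ := norm_sum_le _ _
      _ ≤ ∑ _i ∈ Finset.range L, γ j / (M j : ℝ) := by
          apply Finset.sum_le_sum
          intro i hi
          rw [norm_smul, Real.norm_eq_abs, le_div_iff₀ hMj]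
          exact hB2' j i (lt_of_lt_of_le (Finset.mem_range.mp hi) hL)
      _ = (L : ℝ) * (γ j / (M j : ℝ)) := by
          rw [Finset.sum_const, Finset.card_range, nsmul_eq_mul]
      _ ≤ (M j : ℝ) * (γ j / (M j : ℝ)) := by
          apply mul_le_mul_of_nonneg_right _ (div_nonneg (hγpos j).le hMj.le)
          exact_mod_cast hL
      _ = γ j := by field_simp
  -- pointwise estimates on block errors
  have he : ∀ k j, ‖(if k = j then v j else 0) - (P (M (k+1)) (v j) - P (M k) (v j))‖ ≤
      (if k ≤ j then 2 * γ j else γ k + γ (k-1)) := by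
    intro k j
    rcases lt_trichotomy k j with hkj | rfl | hkj
    · rw [if_neg (by omega), if_pos (by omega), zero_sub, norm_neg]
      calc ‖P (M (k+1)) (v j) - P (M k) (v j)‖
          ≤ ‖P (M (k+1)) (v j)‖ + ‖P (M k) (v j)‖ := norm_sub_le _ _
        _ ≤ γ j + γ j := add_le_add (hPL j _ (hMmono (by omega))) (hPL j _ (hMmono (by omega)))
        _ = 2 * γ j := by ring
    · rw [if_pos rfl, if_pos le_rfl]
      have heq : v k - (P (M (k+1)) (v k) - P (M k) (v k)) =
          (v k - P (M (k+1)) (v k)) + P (M k) (v k) := by abel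
      rw [heq]
      calc ‖(v k - P (M (k+1)) (v k)) + P (M k) (v k)‖
          ≤ ‖v k - P (M (k+1)) (v k)‖ + ‖P (M k) (v k)‖ := norm_add_le _ _
        _ ≤ γ k + γ k := by
            refine add_le_add ?_ (hPL k _ le_rfl)
            rw [norm_sub_rev]
            exact hB1' k k le_rfl
        _ = 2 * γ k := by ring
    · rw [if_neg (by omega), if_neg (by omega), zero_sub, norm_neg]
      cases k with
      | zero => omega
      | succ t =>
        have heq : P (M (t+2)) (v j) - P (M (t+1)) (v j) =
            (P (M (t+2)) (v j) - v j) - (P (M (t+1)) (v j) - v j) := by abel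
        rw [heq]
        calc ‖(P (M (t+2)) (v j) - v j) - (P (M (t+1)) (v j) - v j)‖
            ≤ ‖P (M (t+2)) (v j) - v j‖ + ‖P (M (t+1)) (v j) - v j‖ := norm_sub_le _ _
          _ ≤ γ (t+1) + γ t := add_le_add (hB1' (t+1) j (by omega)) (hB1' t j (by omega))
          _ = γ (t+1) + γ (t+1-1) := by norm_num
  have hpow1 : ∀ k : ℕ, ((1:ℝ)/2)^k ≤ 1 := fun k => pow_le_one₀ (by norm_num) (by norm_num)
  have hpowpos : ∀ k : ℕ, (0:ℝ) < (1/2)^k := fun k => by positivity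
  have hkγ : ∀ k : ℕ, (k:ℝ) * γ k ≤ θ * (1/2)^k := by
    intro k
    nlinarith [hγmul k, hγpos k]
  have hkγ' : ∀ k : ℕ, (k:ℝ) * γ (k-1) ≤ θ := by
    intro k
    cases k with
    | zero => simp; positivity
    | succ t =>
      have h := hγmul t
      have h2 : (t+1:ℕ) - 1 = t := by omega
      rw [h2]
      push_cast
      nlinarith [hpow1 t, hγpos t, hpowpos t]
  have hγθ : ∀ k : ℕ, γ k ≤ θ := fun k =>
    le_trans (hγle k) (by nlinarith [hpow1 k, hθpos])
  have hconst : ∀ (s : Finset ℕ) (c : ℝ) (b : ℕ), 0 ≤ c → s.card ≤ b →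
      ∑ _j ∈ s, c ≤ (b:ℝ) * c := by
    intro s c b hc hb
    rw [Finset.sum_const, nsmul_eq_mul]
    apply mul_le_mul_of_nonneg_right _ hc
    exact_mod_cast hb
  have hIcoA : ∀ k, ∑ j ∈ Finset.Ico k N, 2 * γ j ≤ 4 * θ * (1/2)^k := by
    intro k
    calc ∑ j ∈ Finset.Ico k N, 2 * γ j
        ≤ ∑ j ∈ Finset.Ico k N, 2 * (θ * (1/2)^j) :=
          Finset.sum_le_sum fun j _ =>
            mul_le_mul_of_nonneg_left (hγle j) (by norm_num)
      _ = 2 * ∑ j ∈ Finset.Ico k N, θ * (1/2)^j := by rw [Finset.mul_sum]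
      _ ≤ 2 * (2 * θ * (1/2)^k) := by
          have := geom_tail_le θ hθpos.le k N
          linarith
      _ = 4 * θ * (1/2)^k := by ring
  have hγγnn : ∀ k : ℕ, (0:ℝ) ≤ γ k + γ (k-1) := fun k => by
    have := hγpos k; have := hγpos (k-1); linarith
  have hkγγ : ∀ k : ℕ, (k:ℝ) * (γ k + γ (k-1)) ≤ 2 * θ := by
    intro k
    have h1 := hkγ k
    have h2 := hkγ' k
    have h3 := hpow1 k
    have h4 := hpowpos k
    nlinarith [hθpos]
  have hrow : ∀ k, ∑ j ∈ Finset.range N,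
      (if k ≤ j then 2 * γ j else γ k + γ (k-1)) ≤ 6 * θ := by
    intro k
    rcases le_or_gt k N with hkN | hkN
    · have hsplit : ∑ j ∈ Finset.range N, (if k ≤ j then 2*γ j else γ k + γ (k-1))
          = (∑ _j ∈ Finset.Ico 0 k, (γ k + γ (k-1))) + ∑ j ∈ Finset.Ico k N, 2 * γ j := by
        rw [Finset.range_eq_Ico, ← Finset.sum_Ico_consecutive _ (Nat.zero_le k) hkN]
        congr 1
        · refine Finset.sum_congr rfl fun j hj => if_neg ?_
          have := (Finset.mem_Ico.mp hj).2; omega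
        · exact Finset.sum_congr rfl fun j hj => if_pos (Finset.mem_Ico.mp hj).1
      rw [hsplit]
      have hp2 : ∑ _j ∈ Finset.Ico 0 k, (γ k + γ (k-1)) ≤ 2 * θ := by
        refine le_trans (hconst _ _ k (hγγnn k) ?_) (hkγγ k)
        rw [Nat.card_Ico]; omega
      have hp1 := hIcoA k
      have := hpow1 k
      have := hpowpos k
      nlinarith [hθpos]
    · have hsplit : ∑ j ∈ Finset.range N, (if k ≤ j then 2*γ j else γ k + γ (k-1))
          = ∑ _j ∈ Finset.range N, (γ k + γ (k-1)) := by
        refine Finset.sum_congr rfl fun j hj => if_neg ?_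
        have := Finset.mem_range.mp hj; omega
      rw [hsplit]
      refine le_trans (le_trans (hconst _ _ k (hγγnn k) ?_) (hkγγ k)) (by linarith [hθpos])
      rw [Finset.card_range]; omega
  have hcol : ∀ j, ∑ k ∈ Finset.range N,
      (if k ≤ j then 2 * γ j else γ k + γ (k-1)) ≤ 5 * (θ * (1/2)^j) := by
    intro j
    have hfirst : ∀ (s : Finset ℕ), s.card ≤ j+1 →
        ∑ _k ∈ s, 2 * γ j ≤ 2 * (θ * (1/2)^j) := by
      intro s hs
      refine le_trans (hconst s _ (j+1) (by linarith [hγpos j]) hs) ?_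
      have := hγmul j
      push_cast
      nlinarith [hγpos j]
    rcases le_or_gt (j+1) N with hjN | hjN
    · have hsplit : ∑ k ∈ Finset.range N, (if k ≤ j then 2*γ j else γ k + γ (k-1))
          = (∑ _k ∈ Finset.Ico 0 (j+1), 2 * γ j)
            + ∑ k ∈ Finset.Ico (j+1) N, (γ k + γ (k-1)) := by
        rw [Finset.range_eq_Ico, ← Finset.sum_Ico_consecutive _ (Nat.zero_le (j+1)) hjN]
        congr 1
        · refine Finset.sum_congr rfl fun k hk => if_pos ?_
          have := (Finset.mem_Ico.mp hk).2; omega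
        · refine Finset.sum_congr rfl fun k hk => if_neg ?_
          have := (Finset.mem_Ico.mp hk).1; omega
      rw [hsplit]
      have hp1 : ∑ _k ∈ Finset.Ico 0 (j+1), 2 * γ j ≤ 2 * (θ * (1/2)^j) := by
        apply hfirst
        rw [Nat.card_Ico]
        omega
      have hp2 : ∑ k ∈ Finset.Ico (j+1) N, (γ k + γ (k-1)) ≤ 3 * (θ * (1/2)^j) := by
        rw [Finset.sum_add_distrib]
        have ha : ∑ k ∈ Finset.Ico (j+1) N, γ k ≤ θ * (1/2)^j := by
          calc ∑ k ∈ Finset.Ico (j+1) N, γ k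
              ≤ ∑ k ∈ Finset.Ico (j+1) N, θ * (1/2)^k :=
                Finset.sum_le_sum fun k _ => hγle k
            _ ≤ 2 * θ * (1/2)^(j+1) := geom_tail_le θ hθpos.le (j+1) N
            _ = θ * (1/2)^j := by rw [pow_succ]; ring
        have hb : ∑ k ∈ Finset.Ico (j+1) N, γ (k-1) ≤ 2 * (θ * (1/2)^j) := by
          rw [Finset.sum_Ico_eq_sum_range]
          have hcongr : ∀ i ∈ Finset.range (N - (j+1)), γ (j+1+i-1) = γ (j+i) := by
            intro i _
            congr 1
            omega
          rw [Finset.sum_congr rfl hcongr]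
          calc ∑ i ∈ Finset.range (N-(j+1)), γ (j+i)
              ≤ ∑ i ∈ Finset.range (N-(j+1)), (θ * (1/2)^j) * (1/2)^i := by
                apply Finset.sum_le_sum
                intro i _
                calc γ (j+i) ≤ θ * (1/2)^(j+i) := hγle _
                  _ = (θ * (1/2)^j) * (1/2)^i := by rw [pow_add]; ring
            _ = ∑ i ∈ Finset.Ico 0 (N-(j+1)), (θ * (1/2)^j) * (1/2)^i := by
                rw [Finset.range_eq_Ico]
            _ ≤ 2 * (θ * (1/2)^j) * (1/2)^0 :=
                geom_tail_le (θ * (1/2)^j) (by nlinarith [hθpos, hpowpos j]) 0 (N-(j+1))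
            _ = 2 * (θ * (1/2)^j) := by norm_num
        linarith
      linarith
    · have hsplit : ∑ k ∈ Finset.range N, (if k ≤ j then 2*γ j else γ k + γ (k-1))
          = ∑ _k ∈ Finset.range N, 2 * γ j := by
        refine Finset.sum_congr rfl fun k hk => if_pos ?_
        have := Finset.mem_range.mp hk; omega
      rw [hsplit]
      refine le_trans (hfirst _ ?_) (by nlinarith [hθpos, hpowpos j])
      rw [Finset.card_range]; omega
  have hcolsum : ∑ j ∈ Finset.range N, ∑ k ∈ Finset.range N,
      (if k ≤ j then 2 * γ j else γ k + γ (k-1)) ≤ 10 * θ := by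
    calc ∑ j ∈ Finset.range N, ∑ k ∈ Finset.range N,
        (if k ≤ j then 2 * γ j else γ k + γ (k-1))
        ≤ ∑ j ∈ Finset.range N, 5 * (θ * (1/2)^j) :=
          Finset.sum_le_sum fun j _ => hcol j
      _ = 5 * θ * ∑ j ∈ Finset.range N, (1/2)^j := by
          rw [Finset.mul_sum]
          exact Finset.sum_congr rfl fun j _ => by ring
      _ ≤ 5 * θ * 2 := by
          have := sum_geometric_two_le N
          nlinarith [hθpos]
      _ = 10 * θ := by ring
  -- linearity of partial sums over w
  have hPw : ∀ L, P L w = ∑ j ∈ Finset.range N, lam j • P L (v j) := by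
    intro L
    rw [hwdef, map_sum]
    exact Finset.sum_congr rfl fun j _ => (P L).map_smul _ _
  have hdiff : ∀ k ∈ Finset.range N,
      lam k • v k - (P (M (k+1)) w - P (M k) w)
        = ∑ j ∈ Finset.range N, lam j •
            ((if k = j then v j else 0) - (P (M (k+1)) (v j) - P (M k) (v j))) := by
    intro k hk
    have h1 : ∑ j ∈ Finset.range N, lam j • (if k = j then v j else 0) = lam k • v k := by
      have hc : ∀ j ∈ Finset.range N, lam j • (if k = j then v j else 0)
          = (if k = j then lam j • v j else 0) := by
        intro j _; split <;> simp
      rw [Finset.sum_congr rfl hc, Finset.sum_ite_eq _ k (fun j => lam j • v j), if_pos hk]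
    calc lam k • v k - (P (M (k+1)) w - P (M k) w)
        = ∑ j ∈ Finset.range N, lam j • (if k = j then v j else 0)
          - (∑ j ∈ Finset.range N, lam j • P (M (k+1)) (v j)
             - ∑ j ∈ Finset.range N, lam j • P (M k) (v j)) := by
          rw [h1, ← hPw, ← hPw]
      _ = ∑ j ∈ Finset.range N, (lam j • (if k = j then v j else 0)
            - (lam j • P (M (k+1)) (v j) - lam j • P (M k) (v j))) := by
          rw [Finset.sum_sub_distrib, Finset.sum_sub_distrib]
      _ = _ := by
          refine Finset.sum_congr rfl fun j _ => ?_
          rw [smul_sub, smul_sub]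
  have hDbound : ∀ k ∈ Finset.range N,
      ‖lam k • v k - (P (M (k+1)) w - P (M k) w)‖
        ≤ ∑ j ∈ Finset.range N, |lam j| * (if k ≤ j then 2 * γ j else γ k + γ (k-1)) := by
    intro k hk
    rw [hdiff k hk]
    refine le_trans (norm_sum_le _ _) (Finset.sum_le_sum fun j _ => ?_)
    rw [norm_smul, Real.norm_eq_abs]
    exact mul_le_mul_of_nonneg_left (he k j) (abs_nonneg _)
  -- the maximal coefficient
  obtain ⟨j₀, hj₀mem, hj₀max⟩ :=
    Finset.exists_max_image (Finset.range N) (fun i => |lam i|) ⟨0, Finset.mem_range.mpr hNpos⟩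
  set Λ : ℝ := |lam j₀| with hΛdef
  have hΛ0 : 0 ≤ Λ := abs_nonneg _
  have hlamΛ : ∀ i ∈ Finset.range N, |lam i| ≤ Λ := by
    intro i hi
    rw [hΛdef]
    exact hj₀max i hi
  have hEnn : ∀ k j : ℕ, (0:ℝ) ≤ (if k ≤ j then 2 * γ j else γ k + γ (k-1)) := by
    intro k j
    split
    · linarith [hγpos j]
    · exact hγγnn k
  have hsumrow : ∀ k, ∑ j ∈ Finset.range N,
        |lam j| * (if k ≤ j then 2*γ j else γ k + γ (k-1))
      ≤ Λ * ∑ j ∈ Finset.range N, (if k ≤ j then 2*γ j else γ k + γ (k-1)) := by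
    intro k
    rw [Finset.mul_sum]
    exact Finset.sum_le_sum fun j hj => mul_le_mul_of_nonneg_right (hlamΛ j hj) (hEnn k j)
  have hΛbound : Λ ≤ 4 * C * ‖w‖ := by
    have h1 : Λ = ‖lam j₀ • v j₀‖ := by
      rw [norm_smul, Real.norm_eq_abs, hv1, mul_one]
    have h2 : lam j₀ • v j₀ = (P (M (j₀+1)) w - P (M j₀) w)
        + (lam j₀ • v j₀ - (P (M (j₀+1)) w - P (M j₀) w)) := by abel
    have h3 : Λ ≤ C * ‖w‖ + C * ‖w‖ + Λ * (6 * θ) := by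
      calc Λ = ‖lam j₀ • v j₀‖ := h1
        _ = ‖(P (M (j₀+1)) w - P (M j₀) w)
            + (lam j₀ • v j₀ - (P (M (j₀+1)) w - P (M j₀) w))‖ := congrArg norm h2
        _ ≤ ‖P (M (j₀+1)) w - P (M j₀) w‖
            + ‖lam j₀ • v j₀ - (P (M (j₀+1)) w - P (M j₀) w)‖ := norm_add_le _ _
        _ ≤ (‖P (M (j₀+1)) w‖ + ‖P (M j₀) w‖) + Λ * (6*θ) := by
            refine add_le_add (norm_sub_le _ _) ?_
            refine le_trans (hDbound j₀ hj₀mem) (le_trans (hsumrow j₀) ?_)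
            exact mul_le_mul_of_nonneg_left (hrow j₀) hΛ0
        _ ≤ C * ‖w‖ + C * ‖w‖ + Λ * (6*θ) := by
            have := hPnorm (M (j₀+1)) w
            have := hPnorm (M j₀) w
            linarith
    nlinarith [hΛ0, hθ20]
  -- the unconditionality bound on the signed projection sum
  set y : X := (∑ k ∈ Finset.range N, σ k • (P (M (k+1)) w - P (M k) w)) + (w - P (M N) w)
    with hydef
  have hy : ‖y‖ ≤ Ku * ‖w‖ := by
    by_cases hw0 : w = 0
    · have hy0 : y = 0 := by
        rw [hydef, hw0]
        simp
      rw [hy0, hw0]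
      simp
    have hwpos : 0 < ‖w‖ := norm_pos_iff.mpr hw0
    set τ : ℕ → ℝ :=
      fun i => if i < M N then σ (Nat.findGreatest (fun k => M k ≤ i) N) else 1 with hτdef
    have hτsigns : ∀ i, τ i = 1 ∨ τ i = -1 := by
      intro i
      rw [hτdef]
      dsimp only
      split
      · exact hσ _
      · exact Or.inl rfl
    have hτblock : ∀ k, k < N → ∀ i, M k ≤ i → i < M (k+1) → τ i = σ k := by
      intro k hk i h1 h2
      have hiMN : i < M N := lt_of_lt_of_le h2 (hMmono hk)
      rw [hτdef]
      dsimp only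
      rw [if_pos hiMN]
      congr 1
      rw [Nat.findGreatest_eq_iff]
      refine ⟨hk.le, fun _ => h1, ?_⟩
      intro n' hn1 hn2 hn3
      have : M (k+1) ≤ M n' := hMmono hn1
      omega
    have hτtail : ∀ i, M N ≤ i → τ i = 1 := by
      intro i hi
      rw [hτdef]
      dsimp only
      rw [if_neg (by omega)]
    have hsum1 : HasSum (fun i => f i w • x i) w := huncond w
    have hg0 : ∀ i ∉ Finset.range (M N),
        (τ i • (f i w • x i) - f i w • x i) = 0 := by
      intro i hi
      rw [hτtail i (by simpa using hi), one_smul, sub_self]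
    have hsum2 : HasSum (fun i => τ i • (f i w • x i) - f i w • x i)
        (∑ i ∈ Finset.range (M N), (τ i • (f i w • x i) - f i w • x i)) :=
      hasSum_sum_of_ne_finset_zero hg0
    have hsum3 : HasSum (fun i => τ i • (f i w • x i))
        (w + ∑ i ∈ Finset.range (M N), (τ i • (f i w • x i) - f i w • x i)) := by
      have h := hsum1.add hsum2
      have heq : (fun i => f i w • x i + (τ i • (f i w • x i) - f i w • x i))
          = fun i => τ i • (f i w • x i) := by
        funext i
        abel
      rwa [heq] at h
    have hsplitQ : ∀ Q, Q ≤ N → ∑ i ∈ Finset.range (M Q), τ i • (f i w • x i)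
        = ∑ k ∈ Finset.range Q, σ k • (P (M (k+1)) w - P (M k) w) := by
      intro Q
      induction Q with
      | zero => intro _; rw [hM0]; simp
      | succ Q ih =>
        intro hQ
        have hle0 : 0 ≤ M Q := Nat.zero_le _
        have hle : M Q ≤ M (Q+1) := (hMlt Q).le
        rw [Finset.range_eq_Ico, ← Finset.sum_Ico_consecutive _ hle0 hle,
          ← Finset.range_eq_Ico, ih (by omega), Finset.sum_range_succ]
        congr 1
        have hcongr : ∀ i ∈ Finset.Ico (M Q) (M (Q+1)),
            τ i • (f i w • x i) = σ Q • (f i w • x i) := by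
          intro i hi
          rw [hτblock Q (by omega) i (Finset.mem_Ico.mp hi).1 (Finset.mem_Ico.mp hi).2]
        rw [Finset.sum_congr rfl hcongr, ← Finset.smul_sum]
        congr 1
        have hq : P (M Q) w + ∑ i ∈ Finset.Ico (M Q) (M (Q+1)), f i w • x i
            = P (M (Q+1)) w := by
          rw [hPapply, hPapply, Finset.range_eq_Ico, Finset.range_eq_Ico]
          exact Finset.sum_Ico_consecutive _ hle0 hle
        exact eq_sub_of_add_eq' hq
    have hysum : HasSum (fun i => τ i • (f i w • x i)) y := by
      have h1 : ∑ i ∈ Finset.range (M N), (τ i • (f i w • x i) - f i w • x i)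
          = (∑ k ∈ Finset.range N, σ k • (P (M (k+1)) w - P (M k) w)) - P (M N) w := by
        rw [Finset.sum_sub_distrib, hsplitQ N le_rfl, ← hPapply]
      rw [hydef]
      have h2 := hsum3
      rw [h1] at h2
      convert h2 using 1
      abel
    have hvnorm : ‖‖w‖⁻¹ • w‖ ≤ 1 := by
      rw [norm_smul, norm_inv, norm_norm, inv_mul_cancel₀ hwpos.ne']
    have hsum4 : HasSum (fun i => τ i • (f i (‖w‖⁻¹ • w) • x i)) (‖w‖⁻¹ • y) := by
      have h := hysum.const_smul (‖w‖⁻¹)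
      have heq : (fun i => ‖w‖⁻¹ • (τ i • (f i w • x i)))
          = fun i => τ i • (f i (‖w‖⁻¹ • w) • x i) := by
        funext i
        have hfi : f i (‖w‖⁻¹ • w) = ‖w‖⁻¹ * f i w := by
          rw [map_smul, smul_eq_mul]
        rw [hfi, mul_smul, smul_comm]
      rwa [heq] at h
    have hmem : ‖‖w‖⁻¹ • y‖ ∈ {r : ℝ | ∃ (vv : X) (σσ : ℕ → ℝ), ‖vv‖ ≤ 1 ∧
        (∀ i, σσ i = 1 ∨ σσ i = -1) ∧ r = ‖∑' i, σσ i • (f i vv • x i)‖} :=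
      ⟨‖w‖⁻¹ • w, τ, hvnorm, hτsigns, by rw [hsum4.tsum_eq]⟩
    have hKle := hKu.1 hmem
    rw [norm_smul, norm_inv, norm_norm] at hKle
    calc ‖y‖ = ‖w‖ * (‖w‖⁻¹ * ‖y‖) := by field_simp
      _ ≤ ‖w‖ * Ku := mul_le_mul_of_nonneg_left hKle hwpos.le
      _ = Ku * ‖w‖ := mul_comm _ _
  -- tail estimate
  have htail : ‖w - P (M N) w‖ ≤ Λ * θ := by
    have hNt : N - 1 + 1 = N := by omega
    have hterm : ∀ j ∈ Finset.range N, ‖v j - P (M N) (v j)‖ ≤ γ (N-1) := by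
      intro j hj
      rw [norm_sub_rev]
      have h := hB1' (N-1) j (by have := Finset.mem_range.mp hj; omega)
      rwa [hNt] at h
    have hwsub : w - P (M N) w = ∑ j ∈ Finset.range N, lam j • (v j - P (M N) (v j)) := by
      calc w - P (M N) w
          = ∑ j ∈ Finset.range N, lam j • v j
            - ∑ j ∈ Finset.range N, lam j • P (M N) (v j) := by
            rw [hPw (M N)]
            rw [hwdef]
        _ = ∑ j ∈ Finset.range N, (lam j • v j - lam j • P (M N) (v j)) :=
            (Finset.sum_sub_distrib _ _).symm
        _ = _ := Finset.sum_congr rfl fun j _ => (smul_sub _ _ _).symm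
    rw [hwsub]
    calc ‖∑ j ∈ Finset.range N, lam j • (v j - P (M N) (v j))‖
        ≤ ∑ j ∈ Finset.range N, ‖lam j • (v j - P (M N) (v j))‖ := norm_sum_le _ _
      _ ≤ ∑ _j ∈ Finset.range N, Λ * γ (N-1) := by
          apply Finset.sum_le_sum
          intro j hj
          rw [norm_smul, Real.norm_eq_abs]
          exact mul_le_mul (hlamΛ j hj) (hterm j hj) (norm_nonneg _) hΛ0
      _ = (N:ℝ) * (Λ * γ (N-1)) := by
          rw [Finset.sum_const, Finset.card_range, nsmul_eq_mul]
      _ = Λ * ((N:ℝ) * γ (N-1)) := by ring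
      _ ≤ Λ * θ := mul_le_mul_of_nonneg_left (hkγ' N) hΛ0
  -- decomposition of w'
  have hdecomp : w' = y + (∑ k ∈ Finset.range N, σ k •
      (lam k • v k - (P (M (k+1)) w - P (M k) w))) + (P (M N) w - w) := by
    rw [hw'def, hydef]
    have h1 : ∀ k ∈ Finset.range N, (σ k * lam k) • v k = σ k • (lam k • v k) := by
      intro k _
      rw [mul_smul]
    rw [Finset.sum_congr rfl h1]
    have h2 : ∀ k ∈ Finset.range N, σ k • (lam k • v k - (P (M (k+1)) w - P (M k) w))
        = σ k • (lam k • v k) - σ k • (P (M (k+1)) w - P (M k) w) := by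
      intro k _
      rw [smul_sub]
    rw [Finset.sum_congr rfl h2, Finset.sum_sub_distrib]
    abel
  have habs1 : ∀ k, |σ k| = 1 := by
    intro k
    rcases hσ k with h | h <;> rw [h] <;> norm_num
  have hmid : ‖∑ k ∈ Finset.range N, σ k •
      (lam k • v k - (P (M (k+1)) w - P (M k) w))‖ ≤ Λ * (10 * θ) := by
    calc ‖∑ k ∈ Finset.range N, σ k • (lam k • v k - (P (M (k+1)) w - P (M k) w))‖
        ≤ ∑ k ∈ Finset.range N,
            ‖σ k • (lam k • v k - (P (M (k+1)) w - P (M k) w))‖ := norm_sum_le _ _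
      _ = ∑ k ∈ Finset.range N, ‖lam k • v k - (P (M (k+1)) w - P (M k) w)‖ := by
          refine Finset.sum_congr rfl fun k _ => ?_
          rw [norm_smul, Real.norm_eq_abs, habs1, one_mul]
      _ ≤ ∑ k ∈ Finset.range N, ∑ j ∈ Finset.range N,
            |lam j| * (if k ≤ j then 2 * γ j else γ k + γ (k-1)) :=
          Finset.sum_le_sum hDbound
      _ ≤ ∑ k ∈ Finset.range N,
            Λ * ∑ j ∈ Finset.range N, (if k ≤ j then 2 * γ j else γ k + γ (k-1)) :=
          Finset.sum_le_sum fun k _ => hsumrow k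
      _ = Λ * ∑ k ∈ Finset.range N, ∑ j ∈ Finset.range N,
            (if k ≤ j then 2 * γ j else γ k + γ (k-1)) := by rw [Finset.mul_sum]
      _ = Λ * ∑ j ∈ Finset.range N, ∑ k ∈ Finset.range N,
            (if k ≤ j then 2 * γ j else γ k + γ (k-1)) := by rw [Finset.sum_comm]
      _ ≤ Λ * (10 * θ) := mul_le_mul_of_nonneg_left hcolsum hΛ0
  calc ‖w'‖ ≤ ‖y‖ + ‖∑ k ∈ Finset.range N, σ k •
        (lam k • v k - (P (M (k+1)) w - P (M k) w))‖ + ‖P (M N) w - w‖ := by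
        rw [hdecomp]
        exact norm_add₃_le
    _ ≤ Ku * ‖w‖ + Λ * (10*θ) + Λ * θ := by
        refine add_le_add (add_le_add hy hmid) ?_
        rw [norm_sub_rev]
        exact htail
    _ ≤ (Ku + ε) * ‖w‖ := by
        have h1 : (11*θ)*Λ ≤ (11*θ)*(4*C*‖w‖) :=
          mul_le_mul_of_nonneg_left hΛbound (by linarith)
        have h3 : 44*(C*θ) ≤ ε := by nlinarith [mul_pos hC0' hθpos]
        have h4 : (44*(C*θ))*‖w‖ ≤ ε*‖w‖ :=
          mul_le_mul_of_nonneg_right h3 (norm_nonneg w)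
        nlinarith [h1, h4]
end

section
/- Let (x_i, f_i) be an unconditional and locally shrinking Schauder frame of a Banach space X. If the frame is not pre-boundedly complete, then X contains a subspace isomorphic to c_0; that is, there exists a continuous linear map T : c_0 → X and constants 0 < a ≤ b such that a‖z‖ ≤ ‖T z‖ ≤ b‖z‖ for all z ∈ c_0. -/
open Filter Topology ZeroAtInfty

set_option linter.unusedSectionVars false

section Aux
variable {X : Type*} [NormedAddCommGroup X] [NormedSpace ℝ X]

lemma tailSupX_nonneg (x : ℕ → X) (g : X →L[ℝ] ℝ) (n : ℕ) : 0 ≤ tailSupX x g n := by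
  apply le_csSup
  · refine ⟨‖g‖, ?_⟩
    rintro r ⟨z, ⟨_, hz1⟩, rfl⟩
    calc |g z| ≤ ‖g‖ * ‖z‖ := g.le_opNorm z
      _ ≤ ‖g‖ * 1 := by gcongr
      _ = ‖g‖ := mul_one _
  · exact ⟨0, ⟨Submodule.zero_mem _, by simp⟩, by simp⟩

lemma tailSupX_bound (x : ℕ → X) (g : X →L[ℝ] ℝ) (n : ℕ) {z : X}
    (hz : z ∈ Submodule.span ℝ (x '' {i | n ≤ i})) : |g z| ≤ tailSupX x g n * ‖z‖ := by
  rcases eq_or_ne z 0 with rfl | hz0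
  · simp
  have hn : (0:ℝ) < ‖z‖ := norm_pos_iff.mpr hz0
  have hmem : ‖z‖⁻¹ • z ∈ Submodule.span ℝ (x '' {i | n ≤ i}) := Submodule.smul_mem _ _ hz
  have h1 : |g (‖z‖⁻¹ • z)| ≤ tailSupX x g n := by
    apply le_csSup
    · refine ⟨‖g‖, ?_⟩
      rintro r ⟨w, ⟨_, hw1⟩, rfl⟩
      calc |g w| ≤ ‖g‖ * ‖w‖ := g.le_opNorm w
        _ ≤ ‖g‖ * 1 := by gcongr
        _ = ‖g‖ := mul_one _
    · exact ⟨‖z‖⁻¹ • z, ⟨hmem, by rw [norm_smul]; simp [abs_of_pos hn, inv_mul_cancel₀ hn.ne']⟩, rfl⟩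
  rw [map_smul] at h1
  have : |g z| = ‖z‖ * |‖z‖⁻¹ * g z| := by
    rw [abs_mul, abs_inv, abs_of_pos hn, ← mul_assoc, mul_inv_cancel₀ hn.ne', one_mul]
  rw [this, smul_eq_mul] at *
  calc ‖z‖ * |‖z‖⁻¹ * g z| ≤ ‖z‖ * tailSupX x g n := by gcongr
    _ = tailSupX x g n * ‖z‖ := mul_comm _ _

/-- dependent choice for sequences where step k may depend on all earlier values. -/
lemma depChoiceSeq {S : Type*} [Inhabited S] (P : ℕ → (ℕ → S) → S → Prop)
    (hmono : ∀ k (prev prev' : ℕ → S) s, (∀ j < k, prev j = prev' j) → P k prev s → P k prev' s)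
    (h : ∀ k prev, ∃ s, P k prev s) : ∃ seq : ℕ → S, ∀ k, P k seq (seq k) := by
  let approx : ℕ → (ℕ → S) := fun k => Nat.rec (fun _ => default)
    (fun k ih => Function.update ih k (Classical.choose (h k ih))) k
  have hstep : ∀ k, approx (k+1) = Function.update (approx k) k (Classical.choose (h k (approx k))) :=
    fun k => rfl
  have hagree : ∀ k m j, j < k → k ≤ m → approx m j = approx k j := by
    intro k m j hj hkm
    induction m with
    | zero => omega
    | succ m ih =>
      rcases Nat.lt_or_ge m k with h1 | h1
      · have : k = m + 1 := by omega
        rw [this]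
      · rw [hstep m, Function.update_of_ne (by omega), ih h1]
  refine ⟨fun k => approx (k+1) k, fun k => ?_⟩
  have hP := Classical.choose_spec (h k (approx k))
  have hval : approx (k+1) k = Classical.choose (h k (approx k)) := by
    rw [hstep k, Function.update_self]
  show P k (fun j => approx (j+1) j) (approx (k+1) k)
  rw [hval]
  exact hmono k (approx k) _ _ (fun j hj => hagree (j+1) k j (Nat.lt_succ_self j) hj) hP

lemma eventually_forall_ge {Q : ℕ → Prop} (h : ∀ᶠ m in atTop, Q m) :
    ∀ᶠ n in atTop, ∀ m, n ≤ m → Q m := by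
  obtain ⟨n₀, hn₀⟩ := eventually_atTop.mp h
  exact eventually_atTop.mpr ⟨n₀, fun n hn m hm => hn₀ m (hn.trans hm)⟩

/-- extraction of blocks from a non-Cauchy sequence of partial sums. -/
lemma notCauchy_blocks {y : ℕ → X} (h : ¬ CauchySeq (fun n => ∑ i ∈ Finset.range n, y i)) :
    ∃ ε : ℝ, 0 < ε ∧ ∀ N : ℕ, ∃ p q : ℕ, N ≤ p ∧ p < q ∧ ε ≤ ‖∑ i ∈ Finset.Ico p q, y i‖ := by
  rw [Metric.cauchySeq_iff] at h
  push_neg at h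
  obtain ⟨ε, hε, hN⟩ := h
  refine ⟨ε, hε, fun N => ?_⟩
  obtain ⟨m, hm, n, hn, hd⟩ := hN N
  have hmn : m ≠ n := by
    intro hEq; rw [hEq] at hd; simp [dist_self] at hd; linarith
  rcases Nat.lt_or_ge m n with h1 | h1
  · refine ⟨m, n, hm, h1, ?_⟩
    rwa [dist_eq_norm, norm_sub_rev, ← Finset.sum_Ico_eq_sub y h1.le] at hd
  · have h2 : n < m := by omega
    refine ⟨n, m, hn, h2, ?_⟩
    rwa [dist_eq_norm, ← Finset.sum_Ico_eq_sub y h2.le] at hd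
end Aux

section Aux
variable {X : Type*} [NormedAddCommGroup X] [NormedSpace ℝ X]

/-- convexity: coefficients in [0,1] bounded by subset sums (with shift v). -/
lemma coeff01_bound (y : ℕ → X) (K : ℝ) :
    ∀ (A : Finset ℕ) (v : X), (∀ B ⊆ A, ‖v + ∑ i ∈ B, y i‖ ≤ K) →
      ∀ c : ℕ → ℝ, (∀ i ∈ A, c i ∈ Set.Icc (0:ℝ) 1) → ‖v + ∑ i ∈ A, c i • y i‖ ≤ K := by
  intro A
  induction A using Finset.induction_on with
  | empty => intro v hB c _; simpa using hB ∅ (by simp)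
  | @insert a A ha ih =>
    intro v hB c hc
    have hca := hc a (Finset.mem_insert_self a A)
    rw [Finset.sum_insert ha]
    have h1 : ‖(v + y a) + ∑ i ∈ A, c i • y i‖ ≤ K := by
      apply ih (v + y a)
      · intro B hBA
        have := hB (insert a B) (by
          intro i hi
          rcases Finset.mem_insert.mp hi with h | h
          · exact h ▸ Finset.mem_insert_self a A
          · exact Finset.mem_insert_of_mem (hBA h))
        rwa [Finset.sum_insert (fun h => ha (hBA h)), ← add_assoc] at this
      · exact fun i hi => hc i (Finset.mem_insert_of_mem hi)
    have h2 : ‖v + ∑ i ∈ A, c i • y i‖ ≤ K := by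
      apply ih v
      · exact fun B hBA => hB B (fun i hi => Finset.mem_insert_of_mem (hBA hi))
      · exact fun i hi => hc i (Finset.mem_insert_of_mem hi)
    have key : v + (c a • y a + ∑ i ∈ A, c i • y i)
        = c a • ((v + y a) + ∑ i ∈ A, c i • y i) + (1 - c a) • (v + ∑ i ∈ A, c i • y i) := by
      have : c a • ((v + y a) + ∑ i ∈ A, c i • y i) + (1 - c a) • (v + ∑ i ∈ A, c i • y i)
          = (c a + (1 - c a)) • (v + ∑ i ∈ A, c i • y i) + c a • y a := by
        rw [add_smul]; module
      rw [this]; simp; abel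
    rw [key]
    calc ‖_ + _‖ ≤ c a * ‖(v + y a) + ∑ i ∈ A, c i • y i‖
          + (1 - c a) * ‖v + ∑ i ∈ A, c i • y i‖ := by
          refine (norm_add_le _ _).trans ?_
          rw [norm_smul, norm_smul, Real.norm_eq_abs, Real.norm_eq_abs,
            abs_of_nonneg hca.1, abs_of_nonneg (by linarith [hca.2])]
      _ ≤ c a * K + (1 - c a) * K := by
          gcongr
          · exact hca.1
          · linarith [hca.2]
      _ = K := by ring

/-- coefficients in [-1,1] bounded by twice subset sums. -/
lemma coeff_abs_bound (y : ℕ → X) (K : ℝ) (A : Finset ℕ)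
    (hB : ∀ B ⊆ A, ‖∑ i ∈ B, y i‖ ≤ K)
    (c : ℕ → ℝ) (hc : ∀ i ∈ A, |c i| ≤ 1) : ‖∑ i ∈ A, c i • y i‖ ≤ 2 * K := by
  have hsplit : ∀ i, c i = max (c i) 0 - max (-c i) 0 := by
    intro i; rcases le_total (c i) 0 with h | h
    · rw [max_eq_right h, max_eq_left (by linarith)]; ring
    · rw [max_eq_left h, max_eq_right (by linarith)]; ring
  have h1 : ‖∑ i ∈ A, max (c i) 0 • y i‖ ≤ K := by
    have := coeff01_bound y K A 0 (by simpa using hB) (fun i => max (c i) 0) ?_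
    · simpa using this
    · intro i hi
      exact ⟨le_max_right _ _, max_le (le_of_abs_le (hc i hi)) zero_le_one⟩
  have h2 : ‖∑ i ∈ A, max (-c i) 0 • y i‖ ≤ K := by
    have := coeff01_bound y K A 0 (by simpa using hB) (fun i => max (-c i) 0) ?_
    · simpa using this
    · intro i hi
      refine ⟨le_max_right _ _, max_le ?_ zero_le_one⟩
      have := hc i hi; rw [abs_le] at this; linarith [this.1]
  calc ‖∑ i ∈ A, c i • y i‖
      = ‖∑ i ∈ A, max (c i) 0 • y i - ∑ i ∈ A, max (-c i) 0 • y i‖ := by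
        rw [← Finset.sum_sub_distrib]
        exact congrArg _ (Finset.sum_congr rfl (fun i _ => by rw [← sub_smul, ← hsplit]))
    _ ≤ ‖∑ i ∈ A, max (c i) 0 • y i‖ + ‖∑ i ∈ A, max (-c i) 0 • y i‖ := norm_sub_le _ _
    _ ≤ 2 * K := by linarith

/-- bounded partial sums of a summable family. -/
lemma summable_partial_bound [CompleteSpace X] {y : ℕ → X} (h : Summable y) :
    ∃ K : ℝ, ∀ B : Finset ℕ, ‖∑ i ∈ B, y i‖ ≤ K := by
  obtain ⟨s, hs⟩ := (summable_iff_vanishing.mp h) (Metric.ball 0 1) (Metric.ball_mem_nhds 0 one_pos)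
  refine ⟨(∑ i ∈ s, ‖y i‖) + 1, fun B => ?_⟩
  have hdecomp : ∑ i ∈ B, y i = (∑ i ∈ B ∩ s, y i) + ∑ i ∈ B \ s, y i := by
    rw [← Finset.sum_union (Finset.disjoint_of_subset_left Finset.inter_subset_right Finset.disjoint_sdiff)]
    exact (Finset.sum_congr (sup_inf_sdiff B s) (fun _ _ => rfl)).symm
  have h1 : ‖∑ i ∈ B ∩ s, y i‖ ≤ ∑ i ∈ s, ‖y i‖ :=
    (norm_sum_le _ _).trans (Finset.sum_le_sum_of_subset_of_nonneg (Finset.inter_subset_right)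
      (fun _ _ _ => norm_nonneg _))
  have h2 : ‖∑ i ∈ B \ s, y i‖ ≤ 1 := by
    have := hs (B \ s) (Finset.sdiff_disjoint)
    rw [Metric.mem_ball, dist_eq_norm, sub_zero] at this
    exact this.le
  rw [hdecomp]
  calc ‖_ + _‖ ≤ _ + _ := norm_add_le _ _
    _ ≤ _ := by gcongr

end Aux

section Aux
variable {X : Type*} [NormedAddCommGroup X] [NormedSpace ℝ X] [CompleteSpace X]

/-- uniform bound on coefficient-modified partial sum operators. -/
lemma uniform_frame_bound (x : ℕ → X) (f : ℕ → X →L[ℝ] ℝ)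
    (huncond : ∀ v : X, HasSum (fun i => f i v • x i) v) :
    ∃ C : ℝ, 1 ≤ C ∧ ∀ (A : Finset ℕ) (c : ℕ → ℝ), (∀ i ∈ A, |c i| ≤ 1) →
      ‖∑ i ∈ A, c i • (f i).smulRight (x i)‖ ≤ C := by
  classical
  let clamp : (ℕ → ℝ) → ℕ → ℝ := fun c i => max (-1) (min 1 (c i))
  have hclamp_abs : ∀ c i, |clamp c i| ≤ 1 := by
    intro c i
    rw [abs_le]
    constructor
    · exact le_max_left _ _
    · exact max_le (by norm_num) (min_le_left _ _)
  have hclamp_eq : ∀ (c : ℕ → ℝ) i, |c i| ≤ 1 → clamp c i = c i := by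
    intro c i h
    rw [abs_le] at h
    simp only [clamp]
    rw [min_eq_right h.2, max_eq_right h.1]
  set g : Finset ℕ × (ℕ → ℝ) → X →L[ℝ] X :=
    fun p => ∑ i ∈ p.1, clamp p.2 i • (f i).smulRight (x i) with hg
  have hpt : ∀ v : X, ∃ C, ∀ p, ‖g p v‖ ≤ C := by
    intro v
    obtain ⟨K, hK⟩ := summable_partial_bound (huncond v).summable
    refine ⟨2 * K, fun p => ?_⟩
    have : g p v = ∑ i ∈ p.1, clamp p.2 i • (f i v • x i) := by
      rw [hg]
      simp [ContinuousLinearMap.sum_apply]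
    rw [this]
    exact coeff_abs_bound _ K p.1 (fun B _ => hK B) _ (fun i _ => hclamp_abs _ i)
  obtain ⟨C', hC'⟩ := banach_steinhaus hpt
  refine ⟨max C' 1, le_max_right _ _, fun A c hc => ?_⟩
  have : ∑ i ∈ A, c i • (f i).smulRight (x i) = g (A, c) := by
    rw [hg]
    exact Finset.sum_congr rfl (fun i hi => by rw [hclamp_eq c i (hc i hi)])
  rw [this]
  exact (hC' (A, c)).trans (le_max_left _ _)

/-- norm bound for coefficient-modified partial sums of `F (f i) • x i`. -/
lemma second_dual_block_bound (x : ℕ → X) (f : ℕ → X →L[ℝ] ℝ)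
    (F : (X →L[ℝ] ℝ) →L[ℝ] ℝ) {C : ℝ} (hC0 : 0 ≤ C)
    (hC : ∀ (A : Finset ℕ) (c : ℕ → ℝ), (∀ i ∈ A, |c i| ≤ 1) →
      ‖∑ i ∈ A, c i • (f i).smulRight (x i)‖ ≤ C)
    (A : Finset ℕ) (c : ℕ → ℝ) (hc : ∀ i ∈ A, |c i| ≤ 1) :
    ‖∑ i ∈ A, c i • (F (f i) • x i)‖ ≤ C * ‖F‖ := by
  set w := ∑ i ∈ A, c i • (F (f i) • x i) with hw
  rcases eq_or_ne w 0 with h0 | h0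
  · rw [h0, norm_zero]
    exact mul_nonneg hC0 (norm_nonneg F)
  obtain ⟨gd, hg1, hg2⟩ := exists_dual_vector ℝ w (norm_ne_zero_iff.mpr h0)
  have hg2' : gd w = ‖w‖ := by exact_mod_cast hg2
  have hcomp : gd.comp (∑ i ∈ A, c i • (f i).smulRight (x i))
      = ∑ i ∈ A, (c i * gd (x i)) • f i := by
    ext v
    simp [ContinuousLinearMap.sum_apply, mul_comm, mul_assoc, mul_left_comm]
  have key : gd w = F (∑ i ∈ A, (c i * gd (x i)) • f i) := by
    rw [hw, map_sum, map_sum]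
    refine Finset.sum_congr rfl (fun i _ => ?_)
    rw [map_smul, map_smul, map_smul]
    simp only [smul_eq_mul]
    ring
  have h4 : ‖∑ i ∈ A, (c i * gd (x i)) • f i‖ ≤ C := by
    rw [← hcomp]
    calc ‖gd.comp _‖ ≤ ‖gd‖ * ‖∑ i ∈ A, c i • (f i).smulRight (x i)‖ := gd.opNorm_comp_le _
      _ ≤ C := by rw [hg1, one_mul]; exact hC A c hc
  have h3 : |F (∑ i ∈ A, (c i * gd (x i)) • f i)| ≤ ‖F‖ * ‖∑ i ∈ A, (c i * gd (x i)) • f i‖ := by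
    rw [← Real.norm_eq_abs]; exact F.le_opNorm _
  rw [hg2'.symm, key]
  calc F _ ≤ |F (∑ i ∈ A, (c i * gd (x i)) • f i)| := le_abs_self _
    _ ≤ ‖F‖ * ‖∑ i ∈ A, (c i * gd (x i)) • f i‖ := h3
    _ ≤ ‖F‖ * C := by gcongr
    _ = C * ‖F‖ := mul_comm _ _
end Aux
section Construction
variable {X : Type*} [NormedAddCommGroup X] [NormedSpace ℝ X]
  (x : ℕ → X) (f : ℕ → X →L[ℝ] ℝ) (F : (X →L[ℝ] ℝ) →L[ℝ] ℝ) (M ε : ℝ)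

noncomputable def frameBlk (s : ℕ × ℕ × ℕ × ℕ) : X :=
  ∑ i ∈ Finset.Ico s.2.1 s.2.2.1, F (f i) • x i

noncomputable def frameδ (k : ℕ) : ℝ := ε / ((k+1) * 2^(k+6))
noncomputable def frameδ' (k : ℕ) : ℝ := ε / 2^(k+6)

lemma frameδ_pos (hε : 0 < ε) (k : ℕ) : 0 < frameδ ε k := by
  unfold frameδ; positivity

lemma frameδ'_pos (hε : 0 < ε) (k : ℕ) : 0 < frameδ' ε k := by
  unfold frameδ'; positivity

lemma frame_denom_le (k : ℕ) : (64:ℝ) ≤ (k+1) * 2^(k+6) := by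
  calc (64:ℝ) = 1 * 2^6 := by norm_num
    _ ≤ (k+1) * 2^(k+6) := by
      have h1 : (0:ℝ) ≤ (k:ℝ) := Nat.cast_nonneg k
      have h2 : (2:ℝ)^6 ≤ 2^(k+6) := by
        apply pow_le_pow_right₀ (by norm_num)
        omega
      have h3 : (0:ℝ) < 2^6 := by norm_num
      nlinarith

lemma frame_denom_le' (k : ℕ) : (64:ℝ) ≤ 2^(k+6) := by
  calc (64:ℝ) = 2^6 := by norm_num
    _ ≤ 2^(k+6) := by
      apply pow_le_pow_right₀ (by norm_num)
      omega

lemma frameδ_le (hε : 0 < ε) (k : ℕ) : frameδ ε k ≤ ε / 64 :=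
  div_le_div_of_nonneg_left hε.le (by norm_num) (frame_denom_le k)

lemma frameδ'_le (hε : 0 < ε) (k : ℕ) : frameδ' ε k ≤ ε / 64 :=
  div_le_div_of_nonneg_left hε.le (by norm_num) (frame_denom_le' k)

lemma frameδ_le' (hε : 0 < ε) (k : ℕ) : frameδ ε k ≤ frameδ' ε k := by
  unfold frameδ frameδ'
  have h1 : (0:ℝ) ≤ (k:ℝ) := Nat.cast_nonneg k
  have h2 : (0:ℝ) < 2^(k+6) := by positivity
  apply div_le_div_of_nonneg_left hε.le h2
  nlinarith

def frameP (k : ℕ) (prev : ℕ → ℕ × ℕ × ℕ × ℕ) (s : ℕ × ℕ × ℕ × ℕ) : Prop :=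
  (∀ j < k, (prev j).2.2.2 < s.1) ∧
  (∀ j < k, ∀ m, s.1 ≤ m →
    ‖(∑ i ∈ Finset.range m, f i (frameBlk x f F (prev j)) • x i) - frameBlk x f F (prev j)‖
      ≤ frameδ ε k) ∧
  (s.1 ≤ s.2.1) ∧
  (M * ∑ i ∈ Finset.range s.1, tailSupX x (f i) s.2.1 * ‖x i‖ ≤ frameδ ε k) ∧
  (∀ j < k, M * ∑ i ∈ Finset.range (prev j).2.2.2, tailSupX x (f i) s.2.1 * ‖x i‖ ≤ frameδ' ε k) ∧
  (s.2.1 < s.2.2.1) ∧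
  (ε ≤ ‖frameBlk x f F s‖) ∧
  (s.2.2.1 ≤ s.2.2.2) ∧
  (‖(∑ i ∈ Finset.range s.2.2.2, f i (frameBlk x f F s) • x i) - frameBlk x f F s‖ ≤ frameδ ε k)

lemma frameP_mono : ∀ (k : ℕ) (prev prev' : ℕ → ℕ × ℕ × ℕ × ℕ) s,
    (∀ j < k, prev j = prev' j) → frameP x f F M ε k prev s → frameP x f F M ε k prev' s := by
  intro k prev prev' s hag h
  obtain ⟨h1, h2, h3, h4, h5, h6, h7, h8, h9⟩ := h
  refine ⟨?_, ?_, h3, h4, ?_, h6, h7, h8, h9⟩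
  · intro j hj; rw [← hag j hj]; exact h1 j hj
  · intro j hj; rw [← hag j hj]; exact h2 j hj
  · intro j hj; rw [← hag j hj]; exact h5 j hj

lemma frameP_step
    (hframe : ∀ v : X, Filter.Tendsto (fun n => ∑ i ∈ Finset.range n, f i v • x i)
      Filter.atTop (nhds v))
    (hshr : ∀ m : ℕ, Filter.Tendsto (tailSupX x (f m)) Filter.atTop (nhds 0))
    (hε : 0 < ε)
    (hblocks : ∀ N : ℕ, ∃ p q : ℕ, N ≤ p ∧ p < q ∧ ε ≤ ‖∑ i ∈ Finset.Ico p q, F (f i) • x i‖) :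
    ∀ (k : ℕ) (prev : ℕ → ℕ × ℕ × ℕ × ℕ), ∃ s, frameP x f F M ε k prev s := by
  intro k prev
  have hδpos := frameδ_pos ε hε k
  have hδ'pos := frameδ'_pos ε hε k
  have htail : ∀ v : X, Filter.Tendsto
      (fun m => ‖(∑ i ∈ Finset.range m, f i v • x i) - v‖) Filter.atTop (nhds 0) := by
    intro v
    have h := (hframe v).sub_const v
    have h' : Filter.Tendsto (fun m => (∑ i ∈ Finset.range m, f i v • x i) - v)
        Filter.atTop (nhds 0) := by simpa using h
    simpa using h'.norm
  -- stage 1 : choose n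
  have e1 : ∀ᶠ n in Filter.atTop, ∀ j ∈ Set.Iio k, (prev j).2.2.2 < n :=
    (Filter.eventually_all_finite (Set.finite_Iio k)).mpr
      (fun j _ => Filter.eventually_gt_atTop _)
  have e2 : ∀ᶠ n in Filter.atTop, ∀ j ∈ Set.Iio k, ∀ m, n ≤ m →
      ‖(∑ i ∈ Finset.range m, f i (frameBlk x f F (prev j)) • x i) - frameBlk x f F (prev j)‖
        ≤ frameδ ε k := by
    refine (Filter.eventually_all_finite (Set.finite_Iio k)).mpr (fun j _ => eventually_forall_ge ?_)
    exact Filter.Tendsto.eventually_le_const hδpos (htail _)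
  obtain ⟨n, hn1, hn2⟩ := (e1.and e2).exists
  -- stage 2 : choose p and the block (p, q)
  have ht4 : Filter.Tendsto (fun p => M * ∑ i ∈ Finset.range n, tailSupX x (f i) p * ‖x i‖)
      Filter.atTop (nhds 0) := by
    have h := tendsto_finset_sum (Finset.range n)
      (fun i (_ : i ∈ Finset.range n) => (hshr i).mul_const ‖x i‖)
    simpa using h.const_mul M
  have e4 : ∀ᶠ p in Filter.atTop,
      M * ∑ i ∈ Finset.range n, tailSupX x (f i) p * ‖x i‖ ≤ frameδ ε k :=
    Filter.Tendsto.eventually_le_const hδpos ht4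
  have e5 : ∀ᶠ p in Filter.atTop, ∀ j ∈ Set.Iio k,
      M * ∑ i ∈ Finset.range (prev j).2.2.2, tailSupX x (f i) p * ‖x i‖ ≤ frameδ' ε k := by
    refine (Filter.eventually_all_finite (Set.finite_Iio k)).mpr (fun j _ => ?_)
    have ht5 : Filter.Tendsto
        (fun p => M * ∑ i ∈ Finset.range (prev j).2.2.2, tailSupX x (f i) p * ‖x i‖)
        Filter.atTop (nhds 0) := by
      have h := tendsto_finset_sum (Finset.range (prev j).2.2.2)
        (fun i (_ : i ∈ Finset.range (prev j).2.2.2) => (hshr i).mul_const ‖x i‖)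
      simpa using h.const_mul M
    exact Filter.Tendsto.eventually_le_const hδ'pos ht5
  have e3 : ∀ᶠ p in Filter.atTop, n ≤ p := Filter.eventually_ge_atTop n
  obtain ⟨p₀, hp₀⟩ := Filter.eventually_atTop.mp ((e3.and e4).and e5)
  obtain ⟨p, q, hpp, hpq, hblk⟩ := hblocks (max p₀ n)
  obtain ⟨⟨hc3, hc4⟩, hc5⟩ := hp₀ p (le_trans (le_max_left _ _) hpp)
  -- stage 3 : choose N
  have e8 : ∀ᶠ N in Filter.atTop, q ≤ N := Filter.eventually_ge_atTop q
  have e9 : ∀ᶠ N in Filter.atTop,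
      ‖(∑ i ∈ Finset.range N, f i (∑ i ∈ Finset.Ico p q, F (f i) • x i) • x i)
        - (∑ i ∈ Finset.Ico p q, F (f i) • x i)‖ ≤ frameδ ε k :=
    Filter.Tendsto.eventually_le_const hδpos (htail _)
  obtain ⟨N, h8, h9⟩ := (e8.and e9).exists
  exact ⟨(n, p, q, N), fun j hj => hn1 j hj, fun j hj => hn2 j hj, hc3, hc4,
    fun j hj => hc5 j hj, hpq, hblk, h8, h9⟩

end Construction

set_option maxHeartbeats 2000000 in
/-- Let `(x i, f i)` be an unconditional and locally shrinking Schauder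
frame of a Banach space `X`. If the frame is not pre-boundedly complete, then `X` contains
an isomorphic copy of `c₀` (here realized as `C₀(ℕ, ℝ)`): there is a continuous linear map
`T : c₀ → X` and constants `0 < a ≤ b` with `a ‖z‖ ≤ ‖T z‖ ≤ b ‖z‖` for all `z`. -/
theorem unconditionalSchauderFrame_not_preBoundedlyComplete_c0
    {X : Type*} [NormedAddCommGroup X] [NormedSpace ℝ X] [CompleteSpace X]
    (x : ℕ → X) (f : ℕ → X →L[ℝ] ℝ)
    (hx : ∀ i, x i ≠ 0) (hf : ∀ i, f i ≠ 0)
    (hframe : ∀ v : X,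
      Tendsto (fun n => ∑ i ∈ Finset.range n, f i v • x i) atTop (𝓝 v))
    (huncond : ∀ v : X, HasSum (fun i => f i v • x i) v)
    (hshr : ∀ m : ℕ, Tendsto (tailSupX x (f m)) atTop (𝓝 0))
    (hnotBdd : ¬ ∀ F : (X →L[ℝ] ℝ) →L[ℝ] ℝ, ∃ v : X,
      Tendsto (fun n => ∑ i ∈ Finset.range n, F (f i) • x i) atTop (𝓝 v)) :
    ∃ (T : C₀(ℕ, ℝ) →L[ℝ] X) (a b : ℝ), 0 < a ∧ a ≤ b ∧
      ∀ z : C₀(ℕ, ℝ), a * ‖z‖ ≤ ‖T z‖ ∧ ‖T z‖ ≤ b * ‖z‖ := by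
  classical
  push_neg at hnotBdd
  obtain ⟨F, hF⟩ := hnotBdd
  obtain ⟨C, hC1, hC⟩ := uniform_frame_bound x f huncond
  have hC0 : (0:ℝ) ≤ C := zero_le_one.trans hC1
  have hCpos : (0:ℝ) < C := lt_of_lt_of_le one_pos hC1
  have hFb := second_dual_block_bound x f F hC0 hC
  have hnc : ¬ CauchySeq (fun n => ∑ i ∈ Finset.range n, F (f i) • x i) := by
    intro h
    obtain ⟨v, hv⟩ := cauchySeq_tendsto_of_complete h
    exact hF v hv
  obtain ⟨ε, hε, hblocks⟩ := notCauchy_blocks hnc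
  set M : ℝ := C * ‖F‖ with hM
  have hM0 : 0 ≤ M := mul_nonneg hC0 (norm_nonneg F)
  obtain ⟨seq, hseq⟩ := depChoiceSeq (frameP x f F M ε)
    (frameP_mono x f F M ε) (frameP_step x f F M ε hframe hshr hε hblocks)
  set nn : ℕ → ℕ := fun k => (seq k).1 with hnn
  set pp : ℕ → ℕ := fun k => (seq k).2.1 with hpp
  set qq : ℕ → ℕ := fun k => (seq k).2.2.1 with hqq
  set NN : ℕ → ℕ := fun k => (seq k).2.2.2 with hNN
  set v : ℕ → X := fun k => frameBlk x f F (seq k) with hv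
  have hvdef : ∀ k, v k = ∑ i ∈ Finset.Ico (pp k) (qq k), F (f i) • x i := fun k => rfl
  -- destructure the properties
  have hc1 : ∀ k, ∀ j < k, NN j < nn k := fun k => (hseq k).1
  have hc2 : ∀ k, ∀ j < k, ∀ m, nn k ≤ m →
      ‖(∑ i ∈ Finset.range m, f i (v j) • x i) - v j‖ ≤ frameδ ε k := fun k => (hseq k).2.1
  have hc3 : ∀ k, nn k ≤ pp k := fun k => (hseq k).2.2.1
  have hc4 : ∀ k, M * ∑ i ∈ Finset.range (nn k), tailSupX x (f i) (pp k) * ‖x i‖ ≤ frameδ ε k :=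
    fun k => (hseq k).2.2.2.1
  have hc5 : ∀ k, ∀ j < k, M * ∑ i ∈ Finset.range (NN j), tailSupX x (f i) (pp k) * ‖x i‖
      ≤ frameδ' ε k := fun k => (hseq k).2.2.2.2.1
  have hc6 : ∀ k, pp k < qq k := fun k => (hseq k).2.2.2.2.2.1
  have hc7 : ∀ k, ε ≤ ‖v k‖ := fun k => (hseq k).2.2.2.2.2.2.1
  have hc8 : ∀ k, qq k ≤ NN k := fun k => (hseq k).2.2.2.2.2.2.2.1
  have hc9 : ∀ k, ‖(∑ i ∈ Finset.range (NN k), f i (v k) • x i) - v k‖ ≤ frameδ ε k :=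
    fun k => (hseq k).2.2.2.2.2.2.2.2
  have hnN : ∀ k, nn k ≤ NN k := fun k => ((hc3 k).trans (hc6 k).le).trans (hc8 k)
  have hqp : ∀ j k, j < k → qq j ≤ pp k :=
    fun j k hjk => (hc8 j).trans (((hc1 k j hjk).le).trans (hc3 k))
  -- upper bound on blocks
  have hvub : ∀ k, ‖v k‖ ≤ M := by
    intro k
    have h := hFb (Finset.Ico (pp k) (qq k)) (fun _ => 1) (fun i _ => by norm_num)
    rw [hM]
    simpa [hvdef k] using h
  -- spans
  have hspan : ∀ k, v k ∈ Submodule.span ℝ (x '' {i | pp k ≤ i}) := by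
    intro k
    rw [hvdef k]
    refine Submodule.sum_mem _ (fun i hi => Submodule.smul_mem _ _ ?_)
    exact Submodule.subset_span ⟨i, (Finset.mem_Ico.mp hi).1, rfl⟩
  have hfv : ∀ i k, |f i (v k)| ≤ tailSupX x (f i) (pp k) * M := by
    intro i k
    calc |f i (v k)| ≤ tailSupX x (f i) (pp k) * ‖v k‖ := tailSupX_bound x (f i) (pp k) (hspan k)
      _ ≤ tailSupX x (f i) (pp k) * M := by
          have := tailSupX_nonneg x (f i) (pp k)
          exact mul_le_mul_of_nonneg_left (hvub k) this
    -- small head of the frame expansion of v k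
  have hPn : ∀ k, ‖∑ i ∈ Finset.range (nn k), f i (v k) • x i‖ ≤ frameδ ε k := by
    intro k
    calc ‖∑ i ∈ Finset.range (nn k), f i (v k) • x i‖
        ≤ ∑ i ∈ Finset.range (nn k), ‖f i (v k) • x i‖ := norm_sum_le _ _
      _ = ∑ i ∈ Finset.range (nn k), |f i (v k)| * ‖x i‖ := by
          refine Finset.sum_congr rfl (fun i _ => ?_)
          rw [norm_smul, Real.norm_eq_abs]
      _ ≤ ∑ i ∈ Finset.range (nn k), tailSupX x (f i) (pp k) * M * ‖x i‖ := by
          refine Finset.sum_le_sum (fun i _ => ?_)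
          exact mul_le_mul_of_nonneg_right (hfv i k) (norm_nonneg _)
      _ = M * ∑ i ∈ Finset.range (nn k), tailSupX x (f i) (pp k) * ‖x i‖ := by
          rw [Finset.mul_sum]
          exact Finset.sum_congr rfl (fun i _ => by ring)
      _ ≤ frameδ ε k := hc4 k
  -- the operators Q and functionals ψ
  set Q : ℕ → X →L[ℝ] X :=
    fun k => ∑ i ∈ Finset.Ico (nn k) (NN k), (f i).smulRight (x i) with hQ
  have hQnorm : ∀ k, ‖Q k‖ ≤ C := by
    intro k
    have h := hC (Finset.Ico (nn k) (NN k)) (fun _ => 1) (fun i _ => by norm_num)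
    simpa [hQ] using h
  have hQapply : ∀ k (w : X), Q k w
      = (∑ i ∈ Finset.range (NN k), f i w • x i) - ∑ i ∈ Finset.range (nn k), f i w • x i := by
    intro k w
    rw [hQ]
    rw [← Finset.sum_Ico_eq_sub (fun i => f i w • x i) (hnN k)]
    simp [ContinuousLinearMap.sum_apply]
  have hφex : ∀ k, ∃ g : X →L[ℝ] ℝ, ‖g‖ = 1 ∧ g (v k) = ‖v k‖ := by
    intro k
    have hvne : v k ≠ 0 := by
      intro h0
      have := hc7 k
      rw [h0, norm_zero] at this
      linarith
    obtain ⟨g, hg1, hg2⟩ := exists_dual_vector ℝ (v k) (norm_ne_zero_iff.mpr hvne)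
    exact ⟨g, hg1, by exact_mod_cast hg2⟩
  choose φ hφ1 hφ2 using hφex
  set ψ : ℕ → X →L[ℝ] ℝ := fun k => (φ k).comp (Q k) with hψ
  have hψnorm : ∀ k, ‖ψ k‖ ≤ C := by
    intro k
    calc ‖ψ k‖ ≤ ‖φ k‖ * ‖Q k‖ := (φ k).opNorm_comp_le (Q k)
      _ = ‖Q k‖ := by rw [hφ1 k, one_mul]
      _ ≤ C := hQnorm k
  have hφbnd : ∀ k (w : X), |φ k w| ≤ ‖w‖ := by
    intro k w
    calc |φ k w| ≤ ‖φ k‖ * ‖w‖ := (φ k).le_opNorm w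
      _ = ‖w‖ := by rw [hφ1 k, one_mul]
  -- E1 : ψ k (v k) is large
  have hE1 : ∀ k, (31/32) * ε ≤ ψ k (v k) := by
    intro k
    have hdiff : ‖v k - Q k (v k)‖ ≤ 2 * frameδ ε k := by
      have hrw : v k - Q k (v k)
          = -((∑ i ∈ Finset.range (NN k), f i (v k) • x i) - v k)
            + ∑ i ∈ Finset.range (nn k), f i (v k) • x i := by
        rw [hQapply k (v k)]; abel
      rw [hrw]
      calc ‖_‖ ≤ ‖-((∑ i ∈ Finset.range (NN k), f i (v k) • x i) - v k)‖
            + ‖∑ i ∈ Finset.range (nn k), f i (v k) • x i‖ := norm_add_le _ _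
        _ ≤ frameδ ε k + frameδ ε k := by
            rw [norm_neg]
            exact add_le_add (hc9 k) (hPn k)
        _ = 2 * frameδ ε k := by ring
    have h1 : ψ k (v k) = φ k (v k) - φ k (v k - Q k (v k)) := by
      rw [hψ]
      simp only [ContinuousLinearMap.comp_apply]
      rw [← map_sub]
      congr 1
      abel
    rw [h1, hφ2 k]
    have h2 : |φ k (v k - Q k (v k))| ≤ 2 * frameδ ε k := (hφbnd k _).trans hdiff
    have h3 : frameδ ε k ≤ ε / 64 := frameδ_le ε hε k
    have h4 : ε ≤ ‖v k‖ := hc7 k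
    have := abs_le.mp h2
    linarith [this.1, this.2]
  have hE1' : ∀ k, (0:ℝ) ≤ ψ k (v k) := by
    intro k
    have := hE1 k
    nlinarith
  -- E2 : j < k
  have hE2 : ∀ j k, j < k → |ψ k (v j)| ≤ 2 * frameδ ε k := by
    intro j k hjk
    have h1 : |ψ k (v j)| ≤ ‖Q k (v j)‖ := by
      rw [hψ]; exact hφbnd k _
    refine h1.trans ?_
    rw [hQapply k (v j)]
    have hrw : (∑ i ∈ Finset.range (NN k), f i (v j) • x i)
          - ∑ i ∈ Finset.range (nn k), f i (v j) • x i
        = ((∑ i ∈ Finset.range (NN k), f i (v j) • x i) - v j)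
          - ((∑ i ∈ Finset.range (nn k), f i (v j) • x i) - v j) := by abel
    rw [hrw]
    calc ‖_‖ ≤ ‖(∑ i ∈ Finset.range (NN k), f i (v j) • x i) - v j‖
          + ‖(∑ i ∈ Finset.range (nn k), f i (v j) • x i) - v j‖ := norm_sub_le _ _
      _ ≤ frameδ ε k + frameδ ε k :=
          add_le_add (hc2 k j hjk (NN k) (hnN k)) (hc2 k j hjk (nn k) le_rfl)
      _ = 2 * frameδ ε k := by ring
  -- E3 : k < j
  have hE3 : ∀ k j, k < j → |ψ k (v j)| ≤ frameδ' ε j := by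
    intro k j hkj
    have h1 : |ψ k (v j)| ≤ ‖Q k (v j)‖ := by
      rw [hψ]; exact hφbnd k _
    refine h1.trans ?_
    have h2 : Q k (v j) = ∑ i ∈ Finset.Ico (nn k) (NN k), f i (v j) • x i := by
      rw [hQ]; simp [ContinuousLinearMap.sum_apply]
    rw [h2]
    calc ‖∑ i ∈ Finset.Ico (nn k) (NN k), f i (v j) • x i‖
        ≤ ∑ i ∈ Finset.Ico (nn k) (NN k), |f i (v j)| * ‖x i‖ := by
          refine (norm_sum_le _ _).trans (le_of_eq ?_)
          refine Finset.sum_congr rfl (fun i _ => ?_)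
          rw [norm_smul, Real.norm_eq_abs]
      _ ≤ ∑ i ∈ Finset.Ico (nn k) (NN k), tailSupX x (f i) (pp j) * M * ‖x i‖ :=
          Finset.sum_le_sum (fun i _ =>
            mul_le_mul_of_nonneg_right (hfv i j) (norm_nonneg _))
      _ ≤ ∑ i ∈ Finset.range (NN k), tailSupX x (f i) (pp j) * M * ‖x i‖ := by
          refine Finset.sum_le_sum_of_subset_of_nonneg ?_ (fun i _ _ => ?_)
          · intro i hi
            rw [Finset.mem_range]
            exact (Finset.mem_Ico.mp hi).2
          · have h3 := tailSupX_nonneg x (f i) (pp j)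
            positivity
      _ = M * ∑ i ∈ Finset.range (NN k), tailSupX x (f i) (pp j) * ‖x i‖ := by
          rw [Finset.mul_sum]
          exact Finset.sum_congr rfl (fun i _ => by ring)
      _ ≤ frameδ' ε j := hc5 j k hkj
    -- E4 : total smallness of the off-diagonal terms
  have hgeo : ∀ n : ℕ, ∑ j ∈ Finset.range n, frameδ' ε j ≤ ε / 32 := by
    intro n
    have hrw : ∀ j : ℕ, frameδ' ε j = (ε / 64) * (1/2 : ℝ)^j := by
      intro j
      show ε / 2^(j+6) = (ε / 64) * (1/2:ℝ)^j
      rw [pow_add, div_pow, one_pow, div_mul_div_comm]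
      norm_num
      rw [mul_comm]
    calc ∑ j ∈ Finset.range n, frameδ' ε j = (ε/64) * ∑ j ∈ Finset.range n, (1/2:ℝ)^j := by
          rw [Finset.mul_sum]
          exact Finset.sum_congr rfl (fun j _ => hrw j)
      _ ≤ (ε/64) * 2 := by
          refine mul_le_mul_of_nonneg_left ?_ (by positivity)
          exact sum_geometric_two_le n
      _ = ε / 32 := by ring
  have hE4 : ∀ k n, ∑ j ∈ (Finset.range n).erase k, |ψ k (v j)| ≤ ε / 16 := by
    intro k n
    have hsubset : (Finset.range n).erase k ⊆ Finset.range k ∪ Finset.Ico (k+1) n := by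
      intro j hj
      rw [Finset.mem_erase, Finset.mem_range] at hj
      rcases Nat.lt_or_ge j k with h | h
      · exact Finset.mem_union_left _ (Finset.mem_range.mpr h)
      · exact Finset.mem_union_right _ (Finset.mem_Ico.mpr ⟨by omega, hj.2⟩)
    have hdisj : Disjoint (Finset.range k) (Finset.Ico (k+1) n) := by
      rw [Finset.disjoint_left]
      intro j hj hj'
      rw [Finset.mem_range] at hj
      rw [Finset.mem_Ico] at hj'
      omega
    calc ∑ j ∈ (Finset.range n).erase k, |ψ k (v j)|
        ≤ ∑ j ∈ Finset.range k ∪ Finset.Ico (k+1) n, |ψ k (v j)| :=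
          Finset.sum_le_sum_of_subset_of_nonneg hsubset (fun _ _ _ => abs_nonneg _)
      _ = ∑ j ∈ Finset.range k, |ψ k (v j)| + ∑ j ∈ Finset.Ico (k+1) n, |ψ k (v j)| :=
          Finset.sum_union hdisj
      _ ≤ ∑ j ∈ Finset.range k, 2 * frameδ ε k + ∑ j ∈ Finset.Ico (k+1) n, frameδ' ε j := by
          refine add_le_add (Finset.sum_le_sum ?_) (Finset.sum_le_sum ?_)
          · intro j hj
            exact hE2 j k (Finset.mem_range.mp hj)
          · intro j hj
            exact hE3 k j (by have := (Finset.mem_Ico.mp hj).1; omega)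
      _ ≤ ε / 32 + ε / 32 := by
          refine add_le_add ?_ ?_
          · rw [Finset.sum_const, Finset.card_range, nsmul_eq_mul]
            show (k:ℝ) * (2 * frameδ ε k) ≤ ε / 32
            have h1 : frameδ ε k = ε / (((k:ℝ)+1) * 2^(k+6)) := rfl
            have h2 : (0:ℝ) < ((k:ℝ)+1) * 2^(k+6) := by positivity
            have h3 : (64:ℝ) ≤ 2^(k+6) := frame_denom_le' k
            have hk0 : (0:ℝ) ≤ (k:ℝ) := Nat.cast_nonneg k
            have h5 : 64*(ε*((k:ℝ)+1)) ≤ 2^(k+6)*(ε*((k:ℝ)+1)) :=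
              mul_le_mul_of_nonneg_right h3 (by positivity)
            calc (k:ℝ) * (2 * frameδ ε k) = (2*(k:ℝ)*ε) / (((k:ℝ)+1)*2^(k+6)) := by
                  rw [h1]; ring
              _ ≤ ε/32 := by
                  rw [div_le_div_iff₀ h2 (by norm_num : (0:ℝ) < 32)]
                  nlinarith [h5, hε.le, hk0]
          · calc ∑ j ∈ Finset.Ico (k+1) n, frameδ' ε j
                ≤ ∑ j ∈ Finset.range n, frameδ' ε j := by
                  refine Finset.sum_le_sum_of_subset_of_nonneg ?_
                    (fun j _ _ => (frameδ'_pos ε hε j).le)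
                  intro j hj
                  rw [Finset.mem_range]
                  exact (Finset.mem_Ico.mp hj).2
            _ ≤ ε / 32 := hgeo n
      _ = ε / 16 := by ring
    -- disjointness of blocks
  have hblkdisj : ∀ j k : ℕ, j ≠ k →
      Disjoint (Finset.Ico (pp j) (qq j)) (Finset.Ico (pp k) (qq k)) := by
    intro j k hjk
    rw [Finset.disjoint_left]
    intro i hij hik
    rw [Finset.mem_Ico] at hij hik
    rcases Nat.lt_or_ge j k with h | h
    · have := hqp j k h; omega
    · have hkj : k < j := by omega
      have := hqp k j hkj; omega
  -- uniform bound for sums of blocks with bounded coefficients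
  have hblocksum : ∀ (s : Finset ℕ) (a : ℕ → ℝ) (r : ℝ), 0 ≤ r →
      (∀ k ∈ s, |a k| ≤ r) → ‖∑ k ∈ s, a k • v k‖ ≤ M * r := by
    intro s a r hr ha
    rcases eq_or_lt_of_le hr with hr0 | hr0
    · have hz : ∀ k ∈ s, a k • v k = 0 := by
        intro k hk
        have h1 : |a k| ≤ 0 := by rw [hr0]; exact ha k hk
        rw [abs_nonpos_iff.mp h1, zero_smul]
      rw [Finset.sum_eq_zero hz, norm_zero, ← hr0, mul_zero]
    · set A := s.biUnion (fun k => Finset.Ico (pp k) (qq k)) with hA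
      set c : ℕ → ℝ := fun i => ∑ k ∈ s, if i ∈ Finset.Ico (pp k) (qq k) then a k else 0
        with hcdef
      have hcabs : ∀ i, |c i| ≤ r := by
        intro i
        by_cases hex : ∃ k ∈ s, i ∈ Finset.Ico (pp k) (qq k)
        · obtain ⟨k₀, hk₀s, hk₀i⟩ := hex
          have h1 : c i = a k₀ := by
            show (∑ k ∈ s, if i ∈ Finset.Ico (pp k) (qq k) then a k else 0) = a k₀
            rw [Finset.sum_eq_single_of_mem k₀ hk₀s]
            · rw [if_pos hk₀i]
            · intro b hbs hbk
              rw [if_neg]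
              intro hbi
              exact absurd hk₀i (Finset.disjoint_left.mp (hblkdisj b k₀ hbk) hbi)
          rw [h1]; exact ha k₀ hk₀s
        · push_neg at hex
          have h1 : c i = 0 := Finset.sum_eq_zero (fun k hk => if_neg (hex k hk))
          rw [h1, abs_zero]; exact hr
      have hrewrite : ∑ i ∈ A, c i • (F (f i) • x i) = ∑ k ∈ s, a k • v k := by
        have step1 : ∀ i ∈ A, c i • (F (f i) • x i)
            = ∑ k ∈ s, if i ∈ Finset.Ico (pp k) (qq k) then a k • (F (f i) • x i) else 0 := by
          intro i _
          show (∑ k ∈ s, if i ∈ Finset.Ico (pp k) (qq k) then a k else 0) • (F (f i) • x i) = _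
          rw [Finset.sum_smul]
          exact Finset.sum_congr rfl (fun k _ => by rw [ite_smul, zero_smul])
        rw [Finset.sum_congr rfl step1, Finset.sum_comm]
        refine Finset.sum_congr rfl (fun k hk => ?_)
        have hsub : Finset.Ico (pp k) (qq k) ⊆ A := by
          rw [hA]; exact Finset.subset_biUnion_of_mem (fun k => Finset.Ico (pp k) (qq k)) hk
        have h2 : ∑ i ∈ A, (if i ∈ Finset.Ico (pp k) (qq k) then a k • (F (f i) • x i) else 0)
            = ∑ i ∈ Finset.Ico (pp k) (qq k), a k • (F (f i) • x i) := by
          rw [← Finset.sum_filter, Finset.filter_mem_eq_inter, Finset.inter_eq_right.mpr hsub]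
        rw [h2, ← Finset.smul_sum, hvdef k]
      rw [← hrewrite]
      have h2 : ∑ i ∈ A, c i • (F (f i) • x i)
          = r • ∑ i ∈ A, (c i / r) • (F (f i) • x i) := by
        rw [Finset.smul_sum]
        refine Finset.sum_congr rfl (fun i _ => ?_)
        conv_rhs => rw [smul_smul, mul_comm r (c i / r), div_mul_cancel₀ (c i) hr0.ne']
      rw [h2, norm_smul, Real.norm_eq_abs, abs_of_pos hr0]
      have h3 : ‖∑ i ∈ A, (c i / r) • (F (f i) • x i)‖ ≤ M := by
        apply hFb A (fun i => c i / r)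
        intro i _
        rw [abs_div, abs_of_pos hr0, div_le_one hr0]
        exact hcabs i
      calc r * ‖∑ i ∈ A, (c i / r) • (F (f i) • x i)‖ ≤ r * M :=
            mul_le_mul_of_nonneg_left h3 hr0.le
        _ = M * r := mul_comm r M
  -- basic facts about C₀ norms
  have hzabs : ∀ (z : C₀(ℕ,ℝ)) (k : ℕ), |z k| ≤ ‖z‖ := by
    intro z k
    rw [← ZeroAtInftyContinuousMap.norm_toBCF_eq_norm]
    exact z.toBCF.norm_coe_le_norm k
  have hzto : ∀ z : C₀(ℕ,ℝ), Tendsto (fun k => z k) atTop (𝓝 0) := by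
    intro z
    rw [← Nat.cofinite_eq_atTop, ← Filter.cocompact_eq_cofinite]
    exact z.zero_at_infty'
  -- summability
  have hsum : ∀ z : C₀(ℕ,ℝ), Summable (fun k => z k • v k) := by
    intro z
    rw [summable_iff_vanishing]
    intro e he
    obtain ⟨η, hη, hball⟩ := Metric.mem_nhds_iff.mp he
    have hr : (0:ℝ) < η / (2*(M+1)) := by positivity
    obtain ⟨m, hm⟩ := (Metric.tendsto_atTop.mp (hzto z)) (η/(2*(M+1))) hr
    refine ⟨Finset.range m, fun t ht => ?_⟩
    apply hball
    rw [Metric.mem_ball, dist_eq_norm, sub_zero]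
    have hbound : ∀ k ∈ t, |z k| ≤ η/(2*(M+1)) := by
      intro k hk
      have hkm : m ≤ k := by
        by_contra hlt
        exact (Finset.disjoint_left.mp ht hk) (Finset.mem_range.mpr (by omega))
      have h1 := hm k hkm
      rw [Real.dist_eq, sub_zero] at h1
      exact h1.le
    calc ‖∑ k ∈ t, z k • v k‖ ≤ M * (η/(2*(M+1))) := hblocksum t _ _ hr.le hbound
      _ = M * η / (2*(M+1)) := by ring
      _ < η := by
          rw [div_lt_iff₀ (by positivity)]
          nlinarith [mul_nonneg hM0 hη.le, hη]
  have hTbound : ∀ z : C₀(ℕ,ℝ), ‖∑' k, z k • v k‖ ≤ M * ‖z‖ := by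
    intro z
    exact le_of_tendsto ((hsum z).hasSum.norm)
      (Filter.Eventually.of_forall
        (fun s => hblocksum s z ‖z‖ (norm_nonneg z) (fun k _ => hzabs z k)))
  -- the operator
  set Tlin : C₀(ℕ,ℝ) →ₗ[ℝ] X :=
    { toFun := fun z => ∑' k, z k • v k
      map_add' := by
        intro z w
        have h1 : (fun k => (z + w) k • v k) = fun k => z k • v k + w k • v k := by
          funext k
          show (z k + w k) • v k = _
          rw [add_smul]
        show ∑' k, (z + w) k • v k = (∑' k, z k • v k) + ∑' k, w k • v k
        rw [h1, Summable.tsum_add (hsum z) (hsum w)]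
      map_smul' := by
        intro r z
        have h1 : (fun k => (r • z) k • v k) = fun k => r • (z k • v k) := by
          funext k
          show (r * z k) • v k = _
          rw [← smul_smul]
        show ∑' k, (r • z) k • v k = (RingHom.id ℝ) r • ∑' k, z k • v k
        rw [h1, Summable.tsum_const_smul r (hsum z)]
        rfl } with hTlin
  set T : C₀(ℕ,ℝ) →L[ℝ] X := Tlin.mkContinuous M (fun z => hTbound z) with hT
  have hTapp : ∀ z, T z = ∑' k, z k • v k := fun z => rfl
  have hTub : ∀ z, ‖T z‖ ≤ M * ‖z‖ := fun z => by rw [hTapp]; exact hTbound z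
  have h3132 : (0:ℝ) < (31/32)*ε := by nlinarith [hε]
  have hSlim : ∀ z : C₀(ℕ,ℝ), Tendsto (fun n => ‖∑ j ∈ Finset.range n, z j • v j‖) atTop
      (𝓝 ‖T z‖) := by
    intro z
    have h1 := (hsum z).hasSum.tendsto_sum_nat
    rw [← hTapp z] at h1
    exact h1.norm
  have hkey : ∀ (z : C₀(ℕ,ℝ)) (k : ℕ), |z k| * ((31/32)*ε) ≤ C * ‖T z‖ + ‖z‖ * (ε/16) := by
    intro z k
    have hstep : ∀ n, k < n →
        |z k| * ((31/32)*ε) ≤ C * ‖∑ j ∈ Finset.range n, z j • v j‖ + ‖z‖ * (ε/16) := by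
      intro n hkn
      have hkmem : k ∈ Finset.range n := Finset.mem_range.mpr hkn
      have hiden : ψ k (∑ j ∈ Finset.range n, z j • v j)
          = ∑ j ∈ Finset.range n, z j * ψ k (v j) := by
        rw [map_sum]
        exact Finset.sum_congr rfl (fun j _ => by rw [map_smul, smul_eq_mul])
      have hsplit : z k * ψ k (v k)
          = ψ k (∑ j ∈ Finset.range n, z j • v j)
            - ∑ j ∈ (Finset.range n).erase k, z j * ψ k (v j) := by
        rw [hiden, ← Finset.add_sum_erase _ _ hkmem]
        ring
      have h1 : |z k| * ψ k (v k) = |z k * ψ k (v k)| := by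
        rw [abs_mul, abs_of_nonneg (hE1' k)]
      have h2 : |ψ k (∑ j ∈ Finset.range n, z j • v j)|
          ≤ C * ‖∑ j ∈ Finset.range n, z j • v j‖ := by
        calc |ψ k (∑ j ∈ Finset.range n, z j • v j)|
            ≤ ‖ψ k‖ * ‖∑ j ∈ Finset.range n, z j • v j‖ := (ψ k).le_opNorm _
          _ ≤ C * ‖∑ j ∈ Finset.range n, z j • v j‖ :=
              mul_le_mul_of_nonneg_right (hψnorm k) (norm_nonneg _)
      have h3 : |∑ j ∈ (Finset.range n).erase k, z j * ψ k (v j)| ≤ ‖z‖ * (ε/16) := by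
        calc |∑ j ∈ (Finset.range n).erase k, z j * ψ k (v j)|
            ≤ ∑ j ∈ (Finset.range n).erase k, |z j * ψ k (v j)| :=
              Finset.abs_sum_le_sum_abs _ _
          _ = ∑ j ∈ (Finset.range n).erase k, |z j| * |ψ k (v j)| :=
              Finset.sum_congr rfl (fun j _ => abs_mul _ _)
          _ ≤ ∑ j ∈ (Finset.range n).erase k, ‖z‖ * |ψ k (v j)| :=
              Finset.sum_le_sum (fun j _ =>
                mul_le_mul_of_nonneg_right (hzabs z j) (abs_nonneg _))
          _ = ‖z‖ * ∑ j ∈ (Finset.range n).erase k, |ψ k (v j)| := (Finset.mul_sum _ _ _).symm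
          _ ≤ ‖z‖ * (ε/16) := mul_le_mul_of_nonneg_left (hE4 k n) (norm_nonneg z)
      have h4 : |z k| * ((31/32)*ε) ≤ |z k| * ψ k (v k) :=
        mul_le_mul_of_nonneg_left (hE1 k) (abs_nonneg _)
      calc |z k| * ((31/32)*ε) ≤ |z k| * ψ k (v k) := h4
        _ = |z k * ψ k (v k)| := h1
        _ = |ψ k (∑ j ∈ Finset.range n, z j • v j)
              - ∑ j ∈ (Finset.range n).erase k, z j * ψ k (v j)| := by rw [hsplit]
        _ ≤ |ψ k (∑ j ∈ Finset.range n, z j • v j)|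
              + |∑ j ∈ (Finset.range n).erase k, z j * ψ k (v j)| := abs_sub _ _
        _ ≤ C * ‖∑ j ∈ Finset.range n, z j • v j‖ + ‖z‖ * (ε/16) := add_le_add h2 h3
    have hlim : Tendsto (fun n => C * ‖∑ j ∈ Finset.range n, z j • v j‖ + ‖z‖ * (ε/16)) atTop
        (𝓝 (C * ‖T z‖ + ‖z‖ * (ε/16))) := ((hSlim z).const_mul C).add_const _
    refine ge_of_tendsto hlim ?_
    filter_upwards [eventually_gt_atTop k] with n hn
    exact hstep n hn
  have hnormle : ∀ z : C₀(ℕ,ℝ), ‖z‖ * ((31/32)*ε) ≤ C * ‖T z‖ + ‖z‖ * (ε/16) := by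
    intro z
    set r := (C * ‖T z‖ + ‖z‖ * (ε/16)) / ((31/32)*ε) with hr
    have hnum0 : (0:ℝ) ≤ C * ‖T z‖ + ‖z‖ * (ε/16) :=
      add_nonneg (mul_nonneg hC0 (norm_nonneg _))
        (mul_nonneg (norm_nonneg _) (by nlinarith [hε]))
    have hrpos : (0:ℝ) ≤ r := div_nonneg hnum0 h3132.le
    have hzle : ‖z‖ ≤ r := by
      rw [← ZeroAtInftyContinuousMap.norm_toBCF_eq_norm]
      refine (BoundedContinuousFunction.norm_le hrpos).mpr (fun k => ?_)
      show ‖z k‖ ≤ r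
      rw [Real.norm_eq_abs, hr, le_div_iff₀ h3132]
      exact hkey z k
    calc ‖z‖ * ((31/32)*ε) ≤ r * ((31/32)*ε) := mul_le_mul_of_nonneg_right hzle h3132.le
      _ = C * ‖T z‖ + ‖z‖ * (ε/16) := by rw [hr, div_mul_cancel₀ _ h3132.ne']
  refine ⟨T, (29/32)*ε/C, max M ((29/32)*ε/C),
    div_pos (by nlinarith [hε]) hCpos, le_max_right _ _, fun z => ⟨?_, ?_⟩⟩
  · have h := hnormle z
    rw [div_mul_eq_mul_div, div_le_iff₀ hCpos]
    nlinarith [h]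
  · calc ‖T z‖ ≤ M * ‖z‖ := hTub z
      _ ≤ max M ((29/32)*ε/C) * ‖z‖ :=
          mul_le_mul_of_nonneg_right (le_max_left _ _) (norm_nonneg z)
end

section
/- Let (x_i, f_i) be an unconditional and locally shrinking Schauder frame of a Banach space X. If the frame is not pre-shrinking, then X contains a subspace isomorphic to ℓ_1; that is, there exists a continuous linear map T : ℓ_1 → X and constants 0 < a ≤ b such that a‖z‖ ≤ ‖T z‖ ≤ b‖z‖ for all z ∈ ℓ_1. -/
open Filter Topology

private lemma aux_norm_tsum_le {X : Type*} [NormedAddCommGroup X]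
    {y : ℕ → X} (hs : Summable y) {C : ℝ}
    (h : ∀ t : Finset ℕ, ‖∑ i ∈ t, y i‖ ≤ C) : ‖∑' i, y i‖ ≤ C := by
  have ht : Tendsto (fun s : Finset ℕ => ‖∑ i ∈ s, y i‖) atTop (𝓝 ‖∑' i, y i‖) :=
    Filter.Tendsto.norm hs.hasSum
  exact le_of_tendsto ht (Filter.Eventually.of_forall h)

private lemma aux_sign_sum_eq {X : Type*} [AddCommGroup X] [Module ℝ X]
    (θ : ℕ → ℝ) (hθ : ∀ i, θ i = 1 ∨ θ i = -1) (y : ℕ → X) (t : Finset ℕ) :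
    ∑ i ∈ t, θ i • y i
      = (∑ i ∈ t.filter (fun i => θ i = 1), y i)
        - ∑ i ∈ t.filter (fun i => ¬ θ i = 1), y i := by
  classical
  rw [← Finset.sum_filter_add_sum_filter_not t (fun i => θ i = 1) (fun i => θ i • y i),
    sub_eq_add_neg, ← Finset.sum_neg_distrib]
  congr 1
  · exact Finset.sum_congr rfl fun i hi => by
      rw [(Finset.mem_filter.1 hi).2, one_smul]
  · refine Finset.sum_congr rfl fun i hi => ?_
    rcases hθ i with h1 | h1
    · exact absurd h1 (Finset.mem_filter.1 hi).2
    · rw [h1, neg_one_smul]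

private lemma aux_sign_summable {X : Type*} [NormedAddCommGroup X] [NormedSpace ℝ X]
    [CompleteSpace X] (θ : ℕ → ℝ) (hθ : ∀ i, θ i = 1 ∨ θ i = -1)
    {y : ℕ → X} (hy : Summable y) : Summable fun i => θ i • y i := by
  rw [summable_iff_vanishing_norm] at hy ⊢
  intro ε hε
  obtain ⟨s, hs⟩ := hy (ε / 2) (by linarith)
  refine ⟨s, fun t ht => ?_⟩
  rw [aux_sign_sum_eq θ hθ]
  calc ‖(∑ i ∈ t.filter (fun i => θ i = 1), y i)
        - ∑ i ∈ t.filter (fun i => ¬ θ i = 1), y i‖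
      ≤ ‖∑ i ∈ t.filter (fun i => θ i = 1), y i‖
        + ‖∑ i ∈ t.filter (fun i => ¬ θ i = 1), y i‖ := norm_sub_le _ _
    _ < ε / 2 + ε / 2 :=
        add_lt_add (hs _ (ht.mono_left (Finset.filter_subset _ t)))
          (hs _ (ht.mono_left (Finset.filter_subset _ t)))
    _ = ε := by ring


set_option maxHeartbeats 3000000

/-- Let `(x i, f i)` be an unconditional and locally shrinking Schauder
frame of a Banach space `X`. If the frame is not pre-shrinking, then `X` contains an
isomorphic copy of `ℓ₁` (realized as `lp (fun _ : ℕ => ℝ) 1`): there is a continuous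
linear map `T : ℓ₁ → X` and constants `0 < a ≤ b` with `a ‖z‖ ≤ ‖T z‖ ≤ b ‖z‖`. -/
theorem unconditionalSchauderFrame_not_preShrinking_l1
    {X : Type*} [NormedAddCommGroup X] [NormedSpace ℝ X] [CompleteSpace X]
    (x : ℕ → X) (f : ℕ → X →L[ℝ] ℝ)
    (hx : ∀ i, x i ≠ 0) (hf : ∀ i, f i ≠ 0)
    (hframe : ∀ v : X,
      Tendsto (fun n => ∑ i ∈ Finset.range n, f i v • x i) atTop (𝓝 v))
    (huncond : ∀ v : X, HasSum (fun i => f i v • x i) v)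
    (hshr : ∀ m : ℕ, Tendsto (tailSupX x (f m)) atTop (𝓝 0))
    (hnotShr : ¬ ∀ g : X →L[ℝ] ℝ,
      Tendsto (fun n => ∑ i ∈ Finset.range n, g (x i) • f i) atTop (𝓝 g)) :
    ∃ (T : lp (fun _ : ℕ => ℝ) 1 →L[ℝ] X) (a b : ℝ), 0 < a ∧ a ≤ b ∧
      ∀ z : lp (fun _ : ℕ => ℝ) 1, a * ‖z‖ ≤ ‖T z‖ ∧ ‖T z‖ ≤ b * ‖z‖ := by
  classical
  -- the partial sum operators
  set Q : Finset ℕ → X →L[ℝ] X :=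
    fun F => ∑ i ∈ F, (f i).smulRight (x i) with hQ
  have hQapp : ∀ (F : Finset ℕ) (v : X), Q F v = ∑ i ∈ F, f i v • x i := by
    intro F v
    simp [hQ, ContinuousLinearMap.sum_apply]
  -- pointwise boundedness of the (differences of) partial sum operators
  have hpt : ∀ v : X, ∃ C : ℝ, ∀ FG : Finset ℕ × Finset ℕ, ‖(Q FG.1 - Q FG.2) v‖ ≤ C := by
    intro v
    have h1 : ∀ᶠ s : Finset ℕ in atTop, dist (∑ i ∈ s, f i v • x i) v < 1 :=
      Metric.tendsto_nhds.mp (huncond v) 1 one_pos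
    obtain ⟨s₀, hs₀⟩ := eventually_atTop.1 h1
    have hsingle : ∀ F : Finset ℕ, ‖Q F v‖ ≤ ‖v‖ + 1 + ∑ i ∈ s₀, ‖f i v • x i‖ := by
      intro F
      have hunion : Q F v = (∑ i ∈ F ∪ s₀, f i v • x i) - ∑ i ∈ s₀ \ F, f i v • x i := by
        rw [hQapp, eq_sub_iff_add_eq, ← Finset.sum_union Finset.disjoint_sdiff,
          Finset.union_sdiff_self_eq_union]
      rw [hunion]
      have h2 : ‖∑ i ∈ F ∪ s₀, f i v • x i‖ ≤ ‖v‖ + 1 := by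
        have := hs₀ (F ∪ s₀) Finset.subset_union_right
        rw [dist_eq_norm] at this
        calc ‖∑ i ∈ F ∪ s₀, f i v • x i‖
            = ‖((∑ i ∈ F ∪ s₀, f i v • x i) - v) + v‖ := by rw [sub_add_cancel]
          _ ≤ ‖(∑ i ∈ F ∪ s₀, f i v • x i) - v‖ + ‖v‖ := norm_add_le _ _
          _ ≤ ‖v‖ + 1 := by linarith
      have h3 : ‖∑ i ∈ s₀ \ F, f i v • x i‖ ≤ ∑ i ∈ s₀, ‖f i v • x i‖ := by
        calc ‖∑ i ∈ s₀ \ F, f i v • x i‖ ≤ ∑ i ∈ s₀ \ F, ‖f i v • x i‖ :=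
              norm_sum_le _ _
          _ ≤ ∑ i ∈ s₀, ‖f i v • x i‖ :=
              Finset.sum_le_sum_of_subset_of_nonneg (Finset.sdiff_subset)
                (fun i _ _ => norm_nonneg _)
      calc ‖_ - _‖ ≤ ‖∑ i ∈ F ∪ s₀, f i v • x i‖ + ‖∑ i ∈ s₀ \ F, f i v • x i‖ :=
            norm_sub_le _ _
        _ ≤ ‖v‖ + 1 + ∑ i ∈ s₀, ‖f i v • x i‖ := by linarith
    refine ⟨2 * (‖v‖ + 1 + ∑ i ∈ s₀, ‖f i v • x i‖), fun FG => ?_⟩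
    rw [ContinuousLinearMap.sub_apply]
    calc ‖Q FG.1 v - Q FG.2 v‖ ≤ ‖Q FG.1 v‖ + ‖Q FG.2 v‖ := norm_sub_le _ _
      _ ≤ _ := by have := hsingle FG.1; have := hsingle FG.2; linarith
  obtain ⟨C, hC⟩ := banach_steinhaus
    (g := fun FG : Finset ℕ × Finset ℕ => Q FG.1 - Q FG.2)
    (fun v => hpt v)
  set K : ℝ := max C 1 with hKdef
  have hK1 : (1 : ℝ) ≤ K := le_max_right _ _
  have hK0 : (0 : ℝ) < K := lt_of_lt_of_le one_pos hK1
  have hKQ : ∀ (F G : Finset ℕ) (v : X), ‖Q F v - Q G v‖ ≤ K * ‖v‖ := by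
    intro F G v
    have h1 : ‖(Q F - Q G) v‖ ≤ ‖Q F - Q G‖ * ‖v‖ := ContinuousLinearMap.le_opNorm _ _
    have h2 := hC (F, G)
    rw [ContinuousLinearMap.sub_apply] at h1
    have : ‖Q F - Q G‖ * ‖v‖ ≤ K * ‖v‖ :=
      mul_le_mul_of_nonneg_right (le_trans h2 (le_max_left _ _)) (norm_nonneg v)
    linarith
  have hKQ1 : ∀ (F : Finset ℕ) (v : X), ‖Q F v‖ ≤ K * ‖v‖ := by
    intro F v
    have h := hKQ F ∅ v
    simpa [hQ] using h
  -- get the functional g and ε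
  push_neg at hnotShr
  obtain ⟨g, hg⟩ := hnotShr
  have hgrw : ∀ n : ℕ, (∑ i ∈ Finset.range n, g (x i) • f i) = g.comp (Q (Finset.range n)) := by
    intro n
    ext v
    simp only [ContinuousLinearMap.sum_apply, ContinuousLinearMap.smul_apply,
      ContinuousLinearMap.coe_comp', Function.comp_apply, hQapp, map_sum, map_smul]
    refine Finset.sum_congr rfl fun i _ => ?_
    simp [mul_comm]
  have hgpos : 0 < ‖g‖ := by
    rcases eq_or_ne g 0 with h0 | h0
    · exfalso
      apply hg
      subst h0
      have : (fun n => ∑ i ∈ Finset.range n, (0 : X →L[ℝ] ℝ) (x i) • f i)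
          = fun _ : ℕ => (0 : X →L[ℝ] ℝ) := by
        funext n
        simp
      rw [this]
      exact tendsto_const_nhds
    · exact norm_pos_iff.2 h0
  obtain ⟨ε, hε, hfreq⟩ : ∃ ε > (0:ℝ), ∀ N : ℕ, ∃ n ≥ N,
      ε ≤ ‖g.comp (Q (Finset.range n)) - g‖ := by
    rw [Metric.tendsto_atTop] at hg
    push_neg at hg
    obtain ⟨ε, hε, hg⟩ := hg
    refine ⟨ε, hε, fun N => ?_⟩
    obtain ⟨n, hn, hd⟩ := hg N
    refine ⟨n, hn, ?_⟩
    rw [dist_eq_norm, hgrw] at hd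
    exact hd
  set ε' : ℝ := ε / 4 with hε'def
  have hε'pos : 0 < ε' := by positivity
  -- the block lemma
  have hblock : ∀ M : ℕ, ∃ u : X,
      u ∈ Submodule.span ℝ (x '' {i | M ≤ i}) ∧ ‖u‖ ≤ K ∧ ε' ≤ g u := by
    intro M
    obtain ⟨n, hnM, hn⟩ := hfreq M
    -- find a unit vector almost attaining the norm
    obtain ⟨v, hv1, hv2⟩ : ∃ v : X, ‖v‖ ≤ 1 ∧
        ε / 2 ≤ ‖(g.comp (Q (Finset.range n)) - g) v‖ := by
      by_contra hcon
      push_neg at hcon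
      have hb : ∀ v : X, ‖(g.comp (Q (Finset.range n)) - g) v‖ ≤ (ε / 2) * ‖v‖ := by
        intro v
        rcases eq_or_ne v 0 with rfl | hv0
        · simp
        · have hnv : (0:ℝ) < ‖v‖ := norm_pos_iff.2 hv0
          have h1 : ‖(g.comp (Q (Finset.range n)) - g) (‖v‖⁻¹ • v)‖ < ε / 2 := by
            refine hcon _ ?_
            rw [norm_smul, norm_inv, norm_norm, inv_mul_cancel₀ (ne_of_gt hnv)]
          rw [map_smul, norm_smul, norm_inv, norm_norm] at h1
          have h2 : ‖(g.comp (Q (Finset.range n)) - g) v‖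
              = ‖v‖ * (‖v‖⁻¹ * ‖(g.comp (Q (Finset.range n)) - g) v‖) := by
            field_simp
          rw [h2]
          calc ‖v‖ * (‖v‖⁻¹ * ‖(g.comp (Q (Finset.range n)) - g) v‖)
              ≤ ‖v‖ * (ε / 2) := by
                exact mul_le_mul_of_nonneg_left (le_of_lt h1) (le_of_lt hnv)
            _ = (ε / 2) * ‖v‖ := mul_comm _ _
      have : ‖g.comp (Q (Finset.range n)) - g‖ ≤ ε / 2 :=
        ContinuousLinearMap.opNorm_le_bound _ (by linarith) hb
      linarith
    -- choose N so that the tail is small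
    obtain ⟨N, hNn, hN⟩ : ∃ N ≥ n, ‖Q (Finset.range N) v - v‖ ≤ ε / (4 * ‖g‖) := by
      have hT : Tendsto (fun m => Q (Finset.range m) v) atTop (𝓝 v) := by
        have := hframe v
        convert this using 2 with m
        exact hQapp _ _
      have h1 : ∀ᶠ m in atTop, ‖Q (Finset.range m) v - v‖ ≤ ε / (4 * ‖g‖) := by
        have h2 : ∀ᶠ m in atTop, dist (Q (Finset.range m) v) v < ε / (4 * ‖g‖) :=
          Metric.tendsto_nhds.mp hT _ (by positivity)
        filter_upwards [h2] with m hm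
        rw [dist_eq_norm] at hm
        exact le_of_lt hm
      obtain ⟨N, hN⟩ := (h1.and (eventually_ge_atTop n)).exists
      exact ⟨N, hN.2, hN.1⟩
    set u' : X := Q (Finset.range N) v - Q (Finset.range n) v with hu'def
    have hu'norm : ‖u'‖ ≤ K := by
      calc ‖u'‖ ≤ K * ‖v‖ := hKQ _ _ v
        _ ≤ K * 1 := mul_le_mul_of_nonneg_left hv1 (le_of_lt hK0)
        _ = K := mul_one K
    have hu'g : ε' ≤ |g u'| := by
      have e1 : ‖g (Q (Finset.range N) v) - g v‖ ≤ ε / 4 := by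
        calc ‖g (Q (Finset.range N) v) - g v‖ = ‖g (Q (Finset.range N) v - v)‖ := by
              rw [map_sub]
          _ ≤ ‖g‖ * ‖Q (Finset.range N) v - v‖ := ContinuousLinearMap.le_opNorm _ _
          _ ≤ ‖g‖ * (ε / (4 * ‖g‖)) := mul_le_mul_of_nonneg_left hN (norm_nonneg _)
          _ = ε / 4 := by field_simp
      have e2 : ε / 2 ≤ ‖g (Q (Finset.range n) v) - g v‖ := by
        have : (g.comp (Q (Finset.range n)) - g) v
            = g (Q (Finset.range n) v) - g v := by
          simp [ContinuousLinearMap.sub_apply]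
        rw [this] at hv2
        exact hv2
      have e3 : g u' = (g (Q (Finset.range N) v) - g v) - (g (Q (Finset.range n) v) - g v) := by
        rw [hu'def, map_sub]
        ring
      rw [e3]
      rw [Real.norm_eq_abs] at e1 e2
      have := abs_sub_abs_le_abs_sub (g (Q (Finset.range n) v) - g v)
        (g (Q (Finset.range N) v) - g v)
      have habs : |(g (Q (Finset.range N) v) - g v) - (g (Q (Finset.range n) v) - g v)|
          = |(g (Q (Finset.range n) v) - g v) - (g (Q (Finset.range N) v) - g v)| := by
        rw [abs_sub_comm]
      rw [habs]
      calc ε' = ε / 2 - ε / 4 := by rw [hε'def]; ring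
        _ ≤ |g (Q (Finset.range n) v) - g v| - |g (Q (Finset.range N) v) - g v| := by
            linarith
        _ ≤ |(g (Q (Finset.range n) v) - g v) - (g (Q (Finset.range N) v) - g v)| :=
            abs_sub_abs_le_abs_sub _ _
    have hu'mem : u' ∈ Submodule.span ℝ (x '' {i | M ≤ i}) := by
      have he : u' = ∑ i ∈ Finset.range N \ Finset.range n, f i v • x i := by
        rw [hu'def, hQapp, hQapp, eq_comm, Finset.sum_sdiff_eq_sub]
        exact Finset.range_subset_range.2 hNn
      rw [he]
      refine Submodule.sum_mem _ fun i hi => ?_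
      refine Submodule.smul_mem _ _ (Submodule.subset_span ?_)
      refine ⟨i, ?_, rfl⟩
      simp only [Finset.mem_sdiff, Finset.mem_range] at hi
      have : n ≤ i := le_of_not_gt hi.2
      exact le_trans hnM this
    rcases le_or_gt 0 (g u') with hpos | hneg
    · exact ⟨u', hu'mem, hu'norm, by rwa [abs_of_nonneg hpos] at hu'g⟩
    · refine ⟨-u', Submodule.neg_mem _ hu'mem, by rwa [norm_neg], ?_⟩
      rw [map_neg]
      rwa [abs_of_neg hneg] at hu'g
  -- bound via tailSupX
  have htsup : ∀ (m n : ℕ) (u : X), u ∈ Submodule.span ℝ (x '' {i | n ≤ i}) → ‖u‖ ≤ K →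
      |f m u| ≤ K * tailSupX x (f m) n := by
    intro m n u hmem hnorm
    have hKne : K ≠ 0 := ne_of_gt hK0
    set w : X := K⁻¹ • u with hwdef
    have hwmem : w ∈ Submodule.span ℝ (x '' {i | n ≤ i}) := Submodule.smul_mem _ _ hmem
    have hwnorm : ‖w‖ ≤ 1 := by
      rw [hwdef, norm_smul, norm_inv, Real.norm_eq_abs, abs_of_pos hK0]
      calc K⁻¹ * ‖u‖ ≤ K⁻¹ * K :=
            mul_le_mul_of_nonneg_left hnorm (inv_nonneg.2 (le_of_lt hK0))
        _ = 1 := inv_mul_cancel₀ hKne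
    have hle : |f m w| ≤ tailSupX x (f m) n := by
      refine le_csSup ?_ ⟨w, ⟨hwmem, hwnorm⟩, rfl⟩
      refine ⟨‖f m‖, ?_⟩
      rintro y ⟨z, ⟨_, hz⟩, rfl⟩
      calc |f m z| = ‖f m z‖ := (Real.norm_eq_abs _).symm
        _ ≤ ‖f m‖ * ‖z‖ := ContinuousLinearMap.le_opNorm _ _
        _ ≤ ‖f m‖ * 1 := mul_le_mul_of_nonneg_left hz (norm_nonneg _)
        _ = ‖f m‖ := mul_one _
    have heq : f m u = K * f m w := by
      rw [hwdef, map_smul]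
      simp only [smul_eq_mul]
      field_simp
    rw [heq, abs_mul, abs_of_pos hK0]
    exact mul_le_mul_of_nonneg_left hle (le_of_lt hK0)
  -- the step lemma
  set δ : ℝ := ε' / (12 * (‖g‖ + 1)) with hδdef
  have hδpos : 0 < δ := by positivity
  have hstep : ∀ Mk : ℕ, ∃ (u : X) (M' : ℕ), Mk < M' ∧ ‖u‖ ≤ K ∧ ε' ≤ g u ∧
      (∑ m ∈ Finset.range Mk, |f m u| * ‖x m‖) ≤ δ ∧
      ∀ t : Finset ℕ, (∀ i ∈ t, M' ≤ i) → ‖∑ i ∈ t, f i u • x i‖ ≤ δ := by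
    intro Mk
    have htend : Tendsto
        (fun n => ∑ m ∈ Finset.range Mk, K * tailSupX x (f m) n * ‖x m‖) atTop
        (𝓝 (∑ m ∈ Finset.range Mk, (0:ℝ))) := by
      refine tendsto_finset_sum _ fun m _ => ?_
      have h1 := ((hshr m).const_mul K).mul_const ‖x m‖
      simpa using h1
    rw [Finset.sum_const_zero] at htend
    have hev : ∀ᶠ n in atTop,
        (∑ m ∈ Finset.range Mk, K * tailSupX x (f m) n * ‖x m‖) ≤ δ := by
      have h2 := Metric.tendsto_nhds.mp htend δ hδpos
      filter_upwards [h2] with n hn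
      rw [Real.dist_eq, sub_zero] at hn
      exact le_of_lt (lt_of_le_of_lt (le_abs_self _) hn)
    obtain ⟨n₀, hn₀⟩ := hev.exists
    obtain ⟨u, humem, hunorm, hug⟩ := hblock n₀
    have hhead : (∑ m ∈ Finset.range Mk, |f m u| * ‖x m‖) ≤ δ := by
      refine le_trans (Finset.sum_le_sum fun m _ => ?_) hn₀
      exact mul_le_mul_of_nonneg_right (htsup m n₀ u humem hunorm) (norm_nonneg _)
    obtain ⟨s, hs⟩ := summable_iff_vanishing_norm.1 (huncond u).summable δ hδpos
    refine ⟨u, max (Mk + 1) (s.sup id + 1),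
      lt_of_lt_of_le (Nat.lt_succ_self Mk) (le_max_left _ _), hunorm, hug, hhead, ?_⟩
    intro t hti
    refine le_of_lt (hs t ?_)
    rw [Finset.disjoint_left]
    intro i hit his
    have h1 : i ≤ s.sup id := Finset.le_sup (f := id) his
    have h2 : s.sup id + 1 ≤ i := le_trans (le_max_right _ _) (hti i hit)
    omega
  -- the recursive construction of blocks
  choose stepu stepM hlt hnu hgu hheadS htailS using hstep
  set M : ℕ → ℕ := fun k => Nat.rec 0 (fun _ m => stepM m) k with hMdef
  set u : ℕ → X := fun k => stepu (M k) with hudef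
  have hMsucc : ∀ k, M (k + 1) = stepM (M k) := fun k => rfl
  have hMlt : ∀ k, M k < M (k + 1) := fun k => hlt (M k)
  have hMmono : StrictMono M := strictMono_nat_of_lt_succ hMlt
  have hMle : ∀ k, k ≤ M k := fun k => hMmono.le_apply
  have hun : ∀ k, ‖u k‖ ≤ K := fun k => hnu (M k)
  have hug2 : ∀ k, ε' ≤ g (u k) := fun k => hgu (M k)
  have hheadk : ∀ k, (∑ m ∈ Finset.range (M k), |f m (u k)| * ‖x m‖) ≤ δ :=
    fun k => hheadS (M k)
  have htailk : ∀ (k : ℕ) (t : Finset ℕ), (∀ i ∈ t, M (k + 1) ≤ i) →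
      ‖∑ i ∈ t, f i (u k) • x i‖ ≤ δ := by
    intro k t ht
    exact htailS (M k) t (by rwa [← hMsucc k])
  -- properties of ℓ¹ elements
  have hz1 : ∀ z : lp (fun _ : ℕ => ℝ) 1, Summable fun k => ‖(z : ∀ _ : ℕ, ℝ) k‖ := by
    intro z
    have h1 := lp.memℓp z
    rw [memℓp_gen_iff (by norm_num)] at h1
    simpa using h1
  have hznorm : ∀ z : lp (fun _ : ℕ => ℝ) 1, ‖z‖ = ∑' k, ‖(z : ∀ _ : ℕ, ℝ) k‖ := by
    intro z
    rw [lp.norm_eq_tsum_rpow (by norm_num) z]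
    simp
  have hzsum : ∀ z : lp (fun _ : ℕ => ℝ) 1, Summable fun k => (z : ∀ _ : ℕ, ℝ) k • u k := by
    intro z
    refine Summable.of_norm_bounded
      ((hz1 z).mul_right K) (fun k => ?_)
    rw [norm_smul]
    exact mul_le_mul_of_nonneg_left (hun k) (norm_nonneg _)
  -- the operator T
  set Tlin : lp (fun _ : ℕ => ℝ) 1 →ₗ[ℝ] X :=
    { toFun := fun z => ∑' k, (z : ∀ _ : ℕ, ℝ) k • u k
      map_add' := by
        intro z w
        have h1 : (fun k => ((z + w : lp (fun _ : ℕ => ℝ) 1) : ∀ _ : ℕ, ℝ) k • u k)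
            = fun k => (z : ∀ _ : ℕ, ℝ) k • u k + (w : ∀ _ : ℕ, ℝ) k • u k := by
          funext k
          rw [lp.coeFn_add]
          simp [add_smul]
        simp only [h1]
        exact ((hzsum z).hasSum.add (hzsum w).hasSum).tsum_eq
      map_smul' := by
        intro c z
        have h1 : (fun k => ((c • z : lp (fun _ : ℕ => ℝ) 1) : ∀ _ : ℕ, ℝ) k • u k)
            = fun k => c • ((z : ∀ _ : ℕ, ℝ) k • u k) := by
          funext k
          rw [lp.coeFn_smul]
          simp [mul_smul]
        simp only [h1, RingHom.id_apply]
        exact Summable.tsum_const_smul c (hzsum z) } with hTlin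
  have hTbound : ∀ z : lp (fun _ : ℕ => ℝ) 1, ‖Tlin z‖ ≤ K * ‖z‖ := by
    intro z
    have h1 : ‖Tlin z‖ ≤ ∑' k, ‖(z : ∀ _ : ℕ, ℝ) k • u k‖ := by
      refine norm_tsum_le_tsum_norm ?_
      refine Summable.of_nonneg_of_le (fun k => norm_nonneg _) (fun k => ?_)
        ((hz1 z).mul_right K)
      rw [norm_smul]
      exact mul_le_mul_of_nonneg_left (hun k) (norm_nonneg _)
    have h2 : ∑' k, ‖(z : ∀ _ : ℕ, ℝ) k • u k‖ ≤ ∑' k, ‖(z : ∀ _ : ℕ, ℝ) k‖ * K := by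
      refine Summable.tsum_le_tsum (fun k => ?_) ?_ ((hz1 z).mul_right K)
      · rw [norm_smul]
        exact mul_le_mul_of_nonneg_left (hun k) (norm_nonneg _)
      · refine Summable.of_nonneg_of_le (fun k => norm_nonneg _) (fun k => ?_)
          ((hz1 z).mul_right K)
        rw [norm_smul]
        exact mul_le_mul_of_nonneg_left (hun k) (norm_nonneg _)
    have h3 : ∑' k, ‖(z : ∀ _ : ℕ, ℝ) k‖ * K = K * ‖z‖ := by
      rw [hznorm z]
      rw [← tsum_mul_left]
      refine tsum_congr fun k => mul_comm _ _
    linarith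
  set T : lp (fun _ : ℕ => ℝ) 1 →L[ℝ] X := Tlin.mkContinuous K hTbound with hT
  have hTapp : ∀ z : lp (fun _ : ℕ => ℝ) 1, T z = ∑' k, (z : ∀ _ : ℕ, ℝ) k • u k :=
    fun z => rfl
  set a : ℝ := ε' / (2 * ‖g‖ * K) with hadef
  have hapos : 0 < a := div_pos hε'pos (by positivity)
  refine ⟨T, a, max K a, hapos, le_max_right _ _, fun z => ?_⟩
  constructor
  · -- lower bound
    -- block index of a coordinate
    have hex : ∀ i : ℕ, ∃ k, i < M (k + 1) :=
      fun i => ⟨i, lt_of_lt_of_le (Nat.lt_succ_self i) (hMle (i + 1))⟩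
    set blk : ℕ → ℕ := fun i => Nat.find (hex i) with hblkdef
    have hblkspec : ∀ i, i < M (blk i + 1) := fun i => Nat.find_spec (hex i)
    have hblklb : ∀ i, M (blk i) ≤ i := by
      intro i
      rcases Nat.eq_zero_or_pos (blk i) with h0 | hpos
      · rw [h0]
        exact Nat.zero_le i
      · have h1 := Nat.find_min (hex i) (show blk i - 1 < blk i from Nat.sub_lt hpos one_pos)
        have h2 : blk i - 1 + 1 = blk i := by omega
        rw [h2] at h1
        exact le_of_not_gt h1
    have hblkeq : ∀ k i, M k ≤ i → i < M (k + 1) → blk i = k := by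
      intro k i h1 h2
      refine le_antisymm (Nat.find_min' (hex i) h2) ?_
      have h3 : M k < M (blk i + 1) := lt_of_le_of_lt h1 (hblkspec i)
      have h4 : k < blk i + 1 := hMmono.lt_iff_lt.1 h3
      omega
    set σ : ℕ → ℝ := fun k => if (z : ∀ _ : ℕ, ℝ) k < 0 then (-1 : ℝ) else 1 with hσdef
    set θ : ℕ → ℝ := fun i => σ (blk i) with hθdef
    have hσpm : ∀ k, σ k = 1 ∨ σ k = -1 := by
      intro k
      by_cases h : (z : ∀ _ : ℕ, ℝ) k < 0
      · exact Or.inr (by simp [hσdef, h])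
      · exact Or.inl (by simp [hσdef, h])
    have hθpm : ∀ i, θ i = 1 ∨ θ i = -1 := fun i => hσpm (blk i)
    have hσz : ∀ k, (z : ∀ _ : ℕ, ℝ) k * σ k = |(z : ∀ _ : ℕ, ℝ) k| := by
      intro k
      by_cases h : (z : ∀ _ : ℕ, ℝ) k < 0
      · rw [show σ k = -1 from by simp [hσdef, h], abs_of_neg h]
        ring
      · rw [show σ k = 1 from by simp [hσdef, h], abs_of_nonneg (not_lt.1 h)]
        ring
    -- the sign-modifying operator
    have hsign : ∀ v : X, Summable fun i => θ i • (f i v • x i) :=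
      fun v => aux_sign_summable θ hθpm (huncond v).summable
    have hsignbd : ∀ (v : X) (t : Finset ℕ), ‖∑ i ∈ t, θ i • (f i v • x i)‖ ≤ K * ‖v‖ := by
      intro v t
      rw [aux_sign_sum_eq θ hθpm]
      have h1 := hKQ (t.filter fun i => θ i = 1) (t.filter fun i => ¬ θ i = 1) v
      rw [hQapp, hQapp] at h1
      exact h1
    set Mop : X →ₗ[ℝ] X :=
      { toFun := fun v => ∑' i, θ i • (f i v • x i)
        map_add' := by
          intro v w
          have h1 : (fun i => θ i • (f i (v + w) • x i))
              = fun i => θ i • (f i v • x i) + θ i • (f i w • x i) := by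
            funext i
            rw [map_add, add_smul, smul_add]
          simp only [h1]
          exact ((hsign v).hasSum.add (hsign w).hasSum).tsum_eq
        map_smul' := by
          intro c v
          have h1 : (fun i => θ i • (f i (c • v) • x i))
              = fun i => c • (θ i • (f i v • x i)) := by
            funext i
            rw [map_smul, smul_eq_mul, mul_smul]
            rw [smul_comm]
          simp only [h1, RingHom.id_apply]
          exact Summable.tsum_const_smul c (hsign v) } with hMop
    have hMopbd : ∀ v : X, ‖Mop v‖ ≤ K * ‖v‖ :=
      fun v => aux_norm_tsum_le (hsign v) (hsignbd v)
    set MopC : X →L[ℝ] X := Mop.mkContinuous K hMopbd with hMopC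
    have hMopCapp : ∀ v : X, MopC v = ∑' i, θ i • (f i v • x i) := fun v => rfl
    have hMopCbd : ∀ v : X, ‖MopC v‖ ≤ K * ‖v‖ := hMopbd
    -- per-block estimate
    have hest : ∀ k, ‖MopC (u k) - σ k • u k‖ ≤ 6 * δ := by
      intro k
      have hyS : Summable fun i => f i (u k) • x i := (huncond (u k)).summable
      have h2 : HasSum (fun i => σ k • (f i (u k) • x i)) (σ k • u k) :=
        (huncond (u k)).const_smul (σ k)
      have h3 : HasSum (fun i => θ i • (f i (u k) • x i) - σ k • (f i (u k) • x i))
          (MopC (u k) - σ k • u k) := by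
        rw [hMopCapp]
        exact ((hsign (u k)).hasSum).sub h2
      have h4 : (fun i => θ i • (f i (u k) • x i) - σ k • (f i (u k) • x i))
          = fun i => (θ i - σ k) • (f i (u k) • x i) := by
        funext i
        rw [sub_smul]
      rw [h4] at h3
      rw [← h3.tsum_eq]
      refine aux_norm_tsum_le h3.summable (fun t => ?_)
      -- split the finite sum in three regions
      have hsplit1 := Finset.sum_filter_add_sum_filter_not t (fun i => i < M k)
        (fun i => (θ i - σ k) • (f i (u k) • x i))
      have hsplit2 := Finset.sum_filter_add_sum_filter_not
        (t.filter fun i => ¬ i < M k) (fun i => M (k + 1) ≤ i)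
        (fun i => (θ i - σ k) • (f i (u k) • x i))
      set tlo := t.filter fun i => i < M k with htlo
      set trest := t.filter fun i => ¬ i < M k with htrest
      set thi := trest.filter fun i => M (k + 1) ≤ i with hthi
      set tmid := trest.filter fun i => ¬ M (k + 1) ≤ i with htmid
      have hmid0 : ∑ i ∈ tmid, (θ i - σ k) • (f i (u k) • x i) = 0 := by
        refine Finset.sum_eq_zero fun i hi => ?_
        simp only [htmid, htrest, Finset.mem_filter] at hi
        have hb : blk i = k := hblkeq k i (le_of_not_gt hi.1.2) (lt_of_not_ge hi.2)
        have hts : θ i = σ k := by simp only [hθdef]; rw [hb]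
        rw [hts, sub_self, zero_smul]
      have hlo : ‖∑ i ∈ tlo, (θ i - σ k) • (f i (u k) • x i)‖ ≤ 2 * δ := by
        calc ‖∑ i ∈ tlo, (θ i - σ k) • (f i (u k) • x i)‖
            ≤ ∑ i ∈ tlo, ‖(θ i - σ k) • (f i (u k) • x i)‖ := norm_sum_le _ _
          _ ≤ ∑ i ∈ tlo, 2 * (|f i (u k)| * ‖x i‖) := by
              refine Finset.sum_le_sum fun i _ => ?_
              rw [norm_smul, norm_smul, Real.norm_eq_abs, Real.norm_eq_abs]
              have hb2 : |θ i - σ k| ≤ 2 := by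
                rcases hθpm i with h | h <;> rcases hσpm k with h' | h' <;>
                  rw [h, h'] <;> norm_num
              exact mul_le_mul_of_nonneg_right hb2 (by positivity)
          _ ≤ ∑ m ∈ Finset.range (M k), 2 * (|f m (u k)| * ‖x m‖) := by
              refine Finset.sum_le_sum_of_subset_of_nonneg ?_ (fun i _ _ => by positivity)
              intro i hi
              simp only [htlo, Finset.mem_filter] at hi
              exact Finset.mem_range.2 hi.2
          _ = 2 * ∑ m ∈ Finset.range (M k), |f m (u k)| * ‖x m‖ := by
              rw [Finset.mul_sum]
          _ ≤ 2 * δ := by linarith [hheadk k]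
      have hhi : ‖∑ i ∈ thi, (θ i - σ k) • (f i (u k) • x i)‖ ≤ 3 * δ := by
        have hthisub : ∀ i ∈ thi, M (k + 1) ≤ i := by
          intro i hi
          simp only [hthi, Finset.mem_filter] at hi
          exact hi.2
        have e1 : ∑ i ∈ thi, (θ i - σ k) • (f i (u k) • x i)
            = (∑ i ∈ thi, θ i • (f i (u k) • x i))
              - σ k • ∑ i ∈ thi, f i (u k) • x i := by
          rw [Finset.smul_sum, ← Finset.sum_sub_distrib]
          refine Finset.sum_congr rfl fun i _ => ?_
          rw [sub_smul]
        rw [e1]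
        have e2 : ‖∑ i ∈ thi, θ i • (f i (u k) • x i)‖ ≤ 2 * δ := by
          rw [aux_sign_sum_eq θ hθpm]
          have b1 := htailk k (thi.filter fun i => θ i = 1)
            (fun i hi => hthisub i (Finset.filter_subset _ _ hi))
          have b2 := htailk k (thi.filter fun i => ¬ θ i = 1)
            (fun i hi => hthisub i (Finset.filter_subset _ _ hi))
          calc ‖_ - _‖ ≤ ‖∑ i ∈ thi.filter (fun i => θ i = 1), f i (u k) • x i‖
              + ‖∑ i ∈ thi.filter (fun i => ¬ θ i = 1), f i (u k) • x i‖ :=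
                norm_sub_le _ _
            _ ≤ 2 * δ := by linarith
        have e3 : ‖σ k • ∑ i ∈ thi, f i (u k) • x i‖ ≤ δ := by
          rw [norm_smul, Real.norm_eq_abs]
          have : |σ k| = 1 := by rcases hσpm k with h | h <;> rw [h] <;> norm_num
          rw [this, one_mul]
          exact htailk k thi hthisub
        calc ‖_ - _‖ ≤ ‖∑ i ∈ thi, θ i • (f i (u k) • x i)‖
            + ‖σ k • ∑ i ∈ thi, f i (u k) • x i‖ := norm_sub_le _ _
          _ ≤ 3 * δ := by linarith
      calc ‖∑ i ∈ t, (θ i - σ k) • (f i (u k) • x i)‖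
          = ‖(∑ i ∈ tlo, (θ i - σ k) • (f i (u k) • x i))
            + ((∑ i ∈ thi, (θ i - σ k) • (f i (u k) • x i))
              + ∑ i ∈ tmid, (θ i - σ k) • (f i (u k) • x i))‖ := by
            rw [← hsplit1, ← hsplit2]
        _ ≤ ‖∑ i ∈ tlo, (θ i - σ k) • (f i (u k) • x i)‖
            + (‖∑ i ∈ thi, (θ i - σ k) • (f i (u k) • x i)‖
              + ‖∑ i ∈ tmid, (θ i - σ k) • (f i (u k) • x i)‖) := by
            refine le_trans (norm_add_le _ _) ?_
            exact add_le_add_right (norm_add_le _ _) _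
        _ ≤ 2 * δ + (3 * δ + 0) := by
            rw [hmid0]
            simp only [norm_zero]
            exact add_le_add hlo (add_le_add hhi (le_refl 0))
        _ ≤ 6 * δ := by linarith
    -- error estimate against g
    have herr : ∀ k, |g (MopC (u k)) - σ k * g (u k)| ≤ ε' / 2 := by
      intro k
      have h1 : g (MopC (u k)) - σ k * g (u k) = g (MopC (u k) - σ k • u k) := by
        rw [map_sub, map_smul, smul_eq_mul]
      rw [h1]
      have h2 : |g (MopC (u k) - σ k • u k)| ≤ ‖g‖ * (6 * δ) := by
        calc |g (MopC (u k) - σ k • u k)| = ‖g (MopC (u k) - σ k • u k)‖ :=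
              (Real.norm_eq_abs _).symm
          _ ≤ ‖g‖ * ‖MopC (u k) - σ k • u k‖ := ContinuousLinearMap.le_opNorm _ _
          _ ≤ ‖g‖ * (6 * δ) := mul_le_mul_of_nonneg_left (hest k) (norm_nonneg _)
      have h3 : ‖g‖ * (6 * δ) ≤ ε' / 2 := by
        have h4 : ‖g‖ * (6 * δ) ≤ (‖g‖ + 1) * (6 * δ) := by nlinarith
        have h5 : (‖g‖ + 1) * (6 * δ) = ε' / 2 := by
          rw [hδdef]
          field_simp
          ring
        linarith
      linarith
    -- coordinatewise lower bound
    have hlowk : ∀ k, ε' / 2 * ‖(z : ∀ _ : ℕ, ℝ) k‖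
        ≤ (z : ∀ _ : ℕ, ℝ) k * g (MopC (u k)) := by
      intro k
      have e1 := herr k
      have e2 := hug2 k
      have e3 : (z : ∀ _ : ℕ, ℝ) k * g (MopC (u k))
          = |(z : ∀ _ : ℕ, ℝ) k| * g (u k)
            + (z : ∀ _ : ℕ, ℝ) k * (g (MopC (u k)) - σ k * g (u k)) := by
        rw [← hσz k]
        ring
      rw [Real.norm_eq_abs, e3]
      have e4 : -( |(z : ∀ _ : ℕ, ℝ) k| * (ε' / 2))
          ≤ (z : ∀ _ : ℕ, ℝ) k * (g (MopC (u k)) - σ k * g (u k)) := by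
        have e5 : |(z : ∀ _ : ℕ, ℝ) k * (g (MopC (u k)) - σ k * g (u k))|
            ≤ |(z : ∀ _ : ℕ, ℝ) k| * (ε' / 2) := by
          rw [abs_mul]
          exact mul_le_mul_of_nonneg_left e1 (abs_nonneg _)
        linarith [neg_abs_le ((z : ∀ _ : ℕ, ℝ) k * (g (MopC (u k)) - σ k * g (u k)))]
      have e6 : |(z : ∀ _ : ℕ, ℝ) k| * ε' ≤ |(z : ∀ _ : ℕ, ℝ) k| * g (u k) :=
        mul_le_mul_of_nonneg_left e2 (abs_nonneg _)
      nlinarith [abs_nonneg ((z : ∀ _ : ℕ, ℝ) k)]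
    -- summing up
    have hsum2 : Summable fun k => (z : ∀ _ : ℕ, ℝ) k • MopC (u k) := by
      refine Summable.of_norm_bounded
        ((hz1 z).mul_right (K * K)) (fun k => ?_)
      rw [norm_smul]
      refine mul_le_mul_of_nonneg_left ?_ (norm_nonneg _)
      calc ‖MopC (u k)‖ ≤ K * ‖u k‖ := hMopCbd (u k)
        _ ≤ K * K := mul_le_mul_of_nonneg_left (hun k) (le_of_lt hK0)
    have hkey1 : MopC (T z) = ∑' k, (z : ∀ _ : ℕ, ℝ) k • MopC (u k) := by
      rw [hTapp z, ContinuousLinearMap.map_tsum MopC (hzsum z)]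
      refine tsum_congr fun k => ?_
      rw [map_smul]
    have hkey2 : g (MopC (T z)) = ∑' k, (z : ∀ _ : ℕ, ℝ) k * g (MopC (u k)) := by
      rw [hkey1, ContinuousLinearMap.map_tsum g hsum2]
      refine tsum_congr fun k => ?_
      rw [map_smul, smul_eq_mul]
    have hsum3 : Summable fun k => (z : ∀ _ : ℕ, ℝ) k * g (MopC (u k)) := by
      refine Summable.of_norm_bounded
        ((hz1 z).mul_right (‖g‖ * (K * K))) (fun k => ?_)
      rw [Real.norm_eq_abs, abs_mul, ← Real.norm_eq_abs ((z : ∀ _ : ℕ, ℝ) k)]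
      refine mul_le_mul_of_nonneg_left ?_ (norm_nonneg _)
      calc |g (MopC (u k))| = ‖g (MopC (u k))‖ := (Real.norm_eq_abs _).symm
        _ ≤ ‖g‖ * ‖MopC (u k)‖ := ContinuousLinearMap.le_opNorm _ _
        _ ≤ ‖g‖ * (K * K) := by
            refine mul_le_mul_of_nonneg_left ?_ (norm_nonneg _)
            calc ‖MopC (u k)‖ ≤ K * ‖u k‖ := hMopCbd (u k)
              _ ≤ K * K := mul_le_mul_of_nonneg_left (hun k) (le_of_lt hK0)
    have hkey3 : ε' / 2 * ‖z‖ ≤ g (MopC (T z)) := by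
      rw [hkey2, hznorm z, ← tsum_mul_left]
      exact Summable.tsum_le_tsum hlowk ((hz1 z).mul_left _) hsum3
    have hkey4 : g (MopC (T z)) ≤ ‖g‖ * (K * ‖T z‖) := by
      calc g (MopC (T z)) ≤ |g (MopC (T z))| := le_abs_self _
        _ = ‖g (MopC (T z))‖ := (Real.norm_eq_abs _).symm
        _ ≤ ‖g‖ * ‖MopC (T z)‖ := ContinuousLinearMap.le_opNorm _ _
        _ ≤ ‖g‖ * (K * ‖T z‖) :=
            mul_le_mul_of_nonneg_left (hMopCbd (T z)) (norm_nonneg _)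
    have hkey5 : ε' / 2 * ‖z‖ ≤ ‖g‖ * (K * ‖T z‖) := le_trans hkey3 hkey4
    rw [hadef, div_mul_eq_mul_div, div_le_iff₀ (by positivity)]
    nlinarith [hkey5]
  · -- upper bound
    have h1 : ‖T z‖ ≤ K * ‖z‖ := hTbound z
    calc ‖T z‖ ≤ K * ‖z‖ := h1
      _ ≤ max K a * ‖z‖ := mul_le_mul_of_nonneg_right (le_max_left _ _) (norm_nonneg _)
end
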